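/- arXiv:1509.06234 — 4 statements merged into one kernel-verified Lean document; each statement's English description precedes it below -/
import Mathlib

section
/- Let m ≥ 1 and let Q_1 : [0,π] → ℂ^{m×m} be integrable with Q_1(x)† = −Q_1(x) a.e. Let P_+ and P_− be the absolutely continuous solutions of P_±′(x) = ±Q_1(x)P_±(x), P_±(0) = I on [0,π]. Then there exists a constant C > 0 such that for every real ρ with |ρ| ≥ 1, ‖∫₀^π e^{2iρx} P_+(x)† P_−(x) dx‖ ≤ C/|ρ|, and likewise ‖∫₀^π e^{−2iρx} P_−(x)† P_+(x) dx‖ ≤ C/|ρ|. -/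
open Matrix MeasureTheory Set

attribute [local instance] Matrix.normedAddCommGroup Matrix.normedSpace

noncomputable instance matCENorm (m : ℕ) : ContinuousENorm (Matrix (Fin m) (Fin m) ℂ) :=
  SeminormedAddGroup.toContinuousENorm

noncomputable instance matPMS (m : ℕ) :
    TopologicalSpace.PseudoMetrizableSpace (Matrix (Fin m) (Fin m) ℂ) :=
  PseudoEMetricSpace.pseudoMetrizableSpace

noncomputable instance matENM (m : ℕ) : ENormedAddMonoid (Matrix (Fin m) (Fin m) ℂ) :=
  NormedAddCommGroup.toENormedAddCommMonoid.toENormedAddMonoid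

section

attribute [-instance] instTopologicalSpaceMatrix Matrix.instUniformSpace

noncomputable def mulLaux (m : ℕ) :
    Matrix (Fin m) (Fin m) ℂ →L[ℂ] Matrix (Fin m) (Fin m) ℂ →L[ℂ] Matrix (Fin m) (Fin m) ℂ :=
  LinearMap.toContinuousLinearMap
  { toFun := fun a => LinearMap.toContinuousLinearMap (LinearMap.mulLeft ℂ a)
    map_add' := by intro a b; ext x; simp [add_mul]
    map_smul' := by intro c a; ext x; simp [smul_mul_assoc] }

@[simp] lemma mulLaux_apply {m : ℕ} (a b : Matrix (Fin m) (Fin m) ℂ) :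
    mulLaux m a b = a * b := rfl

noncomputable def ctLaux (m : ℕ) :
    Matrix (Fin m) (Fin m) ℂ →L[ℝ] Matrix (Fin m) (Fin m) ℂ :=
  LinearMap.toContinuousLinearMap
  { toFun := fun a => aᴴ
    map_add' := fun a b => Matrix.conjTranspose_add a b
    map_smul' := by
      intro r a
      ext i j
      simp [Matrix.conjTranspose_apply, Matrix.smul_apply, Complex.real_smul] }

@[simp] lemma ctLaux_apply {m : ℕ} (a : Matrix (Fin m) (Fin m) ℂ) :
    ctLaux m a = aᴴ := rfl

lemma core_fubini {E₁ E₂ E₃ : Type*}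
    [NormedAddCommGroup E₁] [NormedSpace ℂ E₁] [CompleteSpace E₁]
    [NormedAddCommGroup E₂] [NormedSpace ℂ E₂] [CompleteSpace E₂]
    [NormedAddCommGroup E₃] [NormedSpace ℂ E₃] [CompleteSpace E₃]
    (B : E₁ →L[ℂ] E₂ →L[ℂ] E₃) {u : ℝ → E₁} {v : ℝ → E₂} {c : ℝ}
    (hu : IntegrableOn u (Ioc 0 c)) (hv : IntegrableOn v (Ioc 0 c)) :
    ∫ x in Ioc (0:ℝ) c, B (u x) (∫ t in Ioc (0:ℝ) x, v t) =
    ∫ t in Ioc (0:ℝ) c, B (∫ x in Ioc t c, u x) (v t) := by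
  set μ : Measure ℝ := volume.restrict (Ioc 0 c) with hμ
  have hK' : Integrable (fun p : ℝ × ℝ => B (u p.1) (v p.2)) (μ.prod μ) := by
    refine Integrable.mono' (((hu.norm.mul_prod hv.norm).const_mul ‖B‖))
      (B.aestronglyMeasurable_comp₂ hu.aestronglyMeasurable.comp_fst hv.aestronglyMeasurable.comp_snd) ?_
    refine Filter.Eventually.of_forall fun p => ?_
    calc ‖B (u p.1) (v p.2)‖ ≤ ‖B‖ * ‖u p.1‖ * ‖v p.2‖ := B.le_opNorm₂ _ _
      _ = ‖B‖ * (‖u p.1‖ * ‖v p.2‖) := by ring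
  have hK : Integrable (fun p : ℝ × ℝ =>
      {q : ℝ × ℝ | q.2 ≤ q.1}.indicator (fun q => B (u q.1) (v q.2)) p) (μ.prod μ) :=
    hK'.indicator (measurableSet_le measurable_snd measurable_fst)
  have L1 : ∫ x in Ioc (0:ℝ) c, B (u x) (∫ t in Ioc (0:ℝ) x, v t) =
      ∫ x, (∫ t, {q : ℝ × ℝ | q.2 ≤ q.1}.indicator
        (fun q => B (u q.1) (v q.2)) (x, t) ∂μ) ∂μ := by
    refine setIntegral_congr_fun measurableSet_Ioc fun x hx => ?_
    have h1 : Ioc (0:ℝ) x = Iic x ∩ Ioc 0 c := by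
      rw [inter_comm, Ioc_inter_Iic, min_eq_right hx.2]
    have h2 : ∫ t in Ioc (0:ℝ) x, v t = ∫ t, (Iic x).indicator v t ∂μ := by
      rw [h1, ← Measure.restrict_restrict measurableSet_Iic, integral_indicator measurableSet_Iic]
    rw [h2, ← ContinuousLinearMap.integral_comp_comm (B (u x)) (hv.indicator measurableSet_Iic)]
    refine integral_congr_ae (Filter.Eventually.of_forall fun t => ?_)
    by_cases h : t ≤ x
    · simp [Set.indicator_of_mem, h]
    · simp [Set.indicator_of_notMem, h]
  have L3 : ∫ t in Ioc (0:ℝ) c, B (∫ x in Ioc t c, u x) (v t) =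
      ∫ t, (∫ x, {q : ℝ × ℝ | q.2 ≤ q.1}.indicator
        (fun q => B (u q.1) (v q.2)) (x, t) ∂μ) ∂μ := by
    refine setIntegral_congr_fun measurableSet_Ioc fun t ht => ?_
    have h1 : ∀ x : ℝ, {q : ℝ × ℝ | q.2 ≤ q.1}.indicator (fun q => B (u q.1) (v q.2)) (x, t)
        = (Ici t).indicator (fun x => B (u x) (v t)) x := by
      intro x
      by_cases h : t ≤ x
      · simp [Set.indicator_of_mem, h]
      · simp [Set.indicator_of_notMem, h]
    have h2 : Ici t ∩ Ioc 0 c = Icc t c := by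
      ext y
      simp only [mem_inter_iff, mem_Ici, mem_Ioc, mem_Icc]
      constructor
      · rintro ⟨h1', h2', h3'⟩; exact ⟨h1', h3'⟩
      · rintro ⟨h1', h2'⟩; exact ⟨h1', lt_of_lt_of_le ht.1 h1', h2'⟩
    simp_rw [h1]
    rw [integral_indicator measurableSet_Ici, hμ,
      Measure.restrict_restrict measurableSet_Ici, h2, integral_Icc_eq_integral_Ioc]
    have h3 := ContinuousLinearMap.integral_comp_comm (B.flip (v t))
        (hu.mono_set (Ioc_subset_Ioc_left ht.1.le))
    simp only [ContinuousLinearMap.flip_apply] at h3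
    exact h3.symm
  rw [L1, L3, integral_integral_swap hK]

lemma exp_abs_one (ρ x : ℝ) : ‖Complex.exp (2 * Complex.I * (ρ:ℂ) * (x:ℂ))‖ = 1 := by
  have h : (2 * Complex.I * (ρ:ℂ) * (x:ℂ)) = ((2 * ρ * x : ℝ) : ℂ) * Complex.I := by
    push_cast; ring
  rw [h, Complex.norm_exp_ofReal_mul_I]

lemma exp_div_bound {ρ : ℝ} (hρ : 1 ≤ |ρ|) (a b : ℝ) :
    ‖(Complex.exp (2 * Complex.I * (ρ:ℂ) * (b:ℂ)) -
      Complex.exp (2 * Complex.I * (ρ:ℂ) * (a:ℂ))) / (2 * Complex.I * (ρ:ℂ))‖ ≤ 1 / |ρ| := by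
  have hρ0 : (0:ℝ) < |ρ| := lt_of_lt_of_le one_pos hρ
  rw [norm_div]
  have hden : ‖(2 * Complex.I * (ρ:ℂ))‖ = 2 * |ρ| := by
    simp
  have hnum : ‖Complex.exp (2 * Complex.I * (ρ:ℂ) * (b:ℂ)) -
      Complex.exp (2 * Complex.I * (ρ:ℂ) * (a:ℂ))‖ ≤ 2 := by
    calc _ ≤ ‖Complex.exp (2 * Complex.I * (ρ:ℂ) * (b:ℂ))‖ +
        ‖Complex.exp (2 * Complex.I * (ρ:ℂ) * (a:ℂ))‖ := norm_sub_le _ _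
      _ ≤ 2 := by rw [exp_abs_one, exp_abs_one]; norm_num
  rw [hden]
  rw [div_le_div_iff₀ (by positivity) hρ0]
  calc ‖_ - _‖ * |ρ| ≤ 2 * |ρ| := by exact mul_le_mul_of_nonneg_right hnum (abs_nonneg ρ)
    _ ≤ 1 * (2 * |ρ|) := by linarith

lemma mul_int_right {m : ℕ} {u v : ℝ → Matrix (Fin m) (Fin m) ℂ} {μ : Measure ℝ}
    (hu : Integrable u μ) (hv : AEStronglyMeasurable v μ) {M : ℝ}
    (hM : ∀ᵐ t ∂μ, ‖v t‖ ≤ M) : Integrable (fun t => u t * v t) μ := by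
  have hm := (mulLaux m).aestronglyMeasurable_comp₂ hu.aestronglyMeasurable hv
  simp only [mulLaux_apply] at hm
  refine Integrable.mono' (hu.norm.const_mul (‖mulLaux m‖ * M)) hm ?_
  filter_upwards [hM] with t ht
  calc ‖u t * v t‖ = ‖mulLaux m (u t) (v t)‖ := by rw [mulLaux_apply]
    _ ≤ ‖mulLaux m‖ * ‖u t‖ * ‖v t‖ := (mulLaux m).le_opNorm₂ _ _
    _ ≤ ‖mulLaux m‖ * ‖u t‖ * M := mul_le_mul_of_nonneg_left ht (by positivity)
    _ = ‖mulLaux m‖ * M * ‖u t‖ := by ring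

lemma mul_int_left {m : ℕ} {u v : ℝ → Matrix (Fin m) (Fin m) ℂ} {μ : Measure ℝ}
    (hu : AEStronglyMeasurable u μ) (hv : Integrable v μ) {M : ℝ}
    (hM : ∀ᵐ t ∂μ, ‖u t‖ ≤ M) : Integrable (fun t => u t * v t) μ := by
  have hm := (mulLaux m).aestronglyMeasurable_comp₂ hu hv.aestronglyMeasurable
  simp only [mulLaux_apply] at hm
  have hM0 : ∀ᵐ t ∂μ, ‖u t‖ ≤ max M 0 := by
    filter_upwards [hM] with t ht using le_trans ht (le_max_left _ _)
  refine Integrable.mono' (hv.norm.const_mul (‖mulLaux m‖ * max M 0)) hm ?_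
  filter_upwards [hM0] with t ht
  calc ‖u t * v t‖ = ‖mulLaux m (u t) (v t)‖ := by rw [mulLaux_apply]
    _ ≤ ‖mulLaux m‖ * ‖u t‖ * ‖v t‖ := (mulLaux m).le_opNorm₂ _ _
    _ ≤ ‖mulLaux m‖ * max M 0 * ‖v t‖ := by
        refine mul_le_mul_of_nonneg_right ?_ (norm_nonneg _)
        exact mul_le_mul_of_nonneg_left ht (by positivity)

end

/-- With `Q₁` integrable and anti-Hermitian a.e., and `P₊, P₋` the
absolutely continuous solutions of `P₊' = Q₁P₊`, `P₋' = -Q₁P₋`, `P₊(0) = P₋(0) = I`, there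
is a constant `C > 0` such that for every real `ρ` with `|ρ| ≥ 1`,
`‖∫₀^π e^{2iρx} P₊(x)ᴴ P₋(x) dx‖ ≤ C/|ρ|` and `‖∫₀^π e^{-2iρx} P₋(x)ᴴ P₊(x) dx‖ ≤ C/|ρ|`. -/
theorem oscillatory_integral_estimate (m : ℕ) (hm : 1 ≤ m)
    (Q1 Pp Pm : ℝ → Matrix (Fin m) (Fin m) ℂ)
    (hQint : @IntegrableOn _ _ _ _ SeminormedAddGroup.toContinuousENorm Q1 (Icc 0 Real.pi) volume)
    (hQskew : ∀ᵐ x ∂(volume.restrict (Icc 0 Real.pi)), (Q1 x)ᴴ = -Q1 x)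
    (hPpcont : ContinuousOn Pp (Icc 0 Real.pi)) (hPp0 : Pp 0 = 1)
    (hPpint : ∀ x ∈ Icc 0 Real.pi, Pp x = 1 + ∫ t in (0:ℝ)..x, Q1 t * Pp t)
    (hPmcont : ContinuousOn Pm (Icc 0 Real.pi)) (hPm0 : Pm 0 = 1)
    (hPmint : ∀ x ∈ Icc 0 Real.pi, Pm x = 1 - ∫ t in (0:ℝ)..x, Q1 t * Pm t) :
    ∃ C > (0:ℝ), ∀ ρ : ℝ, 1 ≤ |ρ| →
      ‖∫ x in (0:ℝ)..Real.pi, Complex.exp (2 * Complex.I * (ρ : ℂ) * (x : ℂ)) •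
          ((Pp x)ᴴ * Pm x)‖ ≤ C / |ρ| ∧
      ‖∫ x in (0:ℝ)..Real.pi, Complex.exp (-(2 * Complex.I * (ρ : ℂ) * (x : ℂ))) •
          ((Pm x)ᴴ * Pp x)‖ ≤ C / |ρ| := by
  have hπ : (0:ℝ) ≤ Real.pi := Real.pi_nonneg
  -- bounds on Pp, Pm
  obtain ⟨MP, hMP⟩ := isCompact_Icc.exists_bound_of_continuousOn hPpcont
  obtain ⟨MM, hMM⟩ := isCompact_Icc.exists_bound_of_continuousOn hPmcont
  have hPpm : AEStronglyMeasurable Pp (volume.restrict (Icc 0 Real.pi)) :=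
    hPpcont.aestronglyMeasurable measurableSet_Icc
  have hPmm : AEStronglyMeasurable Pm (volume.restrict (Icc 0 Real.pi)) :=
    hPmcont.aestronglyMeasurable measurableSet_Icc
  have hQPp : IntegrableOn (fun t => Q1 t * Pp t) (Icc 0 Real.pi) :=
    mul_int_right hQint hPpm
      (by filter_upwards [ae_restrict_mem measurableSet_Icc] with t ht using hMP t ht)
  have hQPm : IntegrableOn (fun t => Q1 t * Pm t) (Icc 0 Real.pi) :=
    mul_int_right hQint hPmm
      (by filter_upwards [ae_restrict_mem measurableSet_Icc] with t ht using hMM t ht)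
  set f : ℝ → Matrix (Fin m) (Fin m) ℂ := fun t => (Q1 t * Pp t)ᴴ with hfdef
  set g : ℝ → Matrix (Fin m) (Fin m) ℂ := fun t => Q1 t * Pm t with hgdef
  have hfint : IntegrableOn f (Icc 0 Real.pi) := by
    have := (ctLaux m).integrable_comp hQPp
    simp only [ctLaux_apply] at this
    exact this
  have hgint : IntegrableOn g (Icc 0 Real.pi) := hQPm
  set Af : ℝ → Matrix (Fin m) (Fin m) ℂ := fun x => ∫ t in Ioc (0:ℝ) x, f t with hAfdef
  set Bg : ℝ → Matrix (Fin m) (Fin m) ℂ := fun x => ∫ t in Ioc (0:ℝ) x, g t with hBgdef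
  have hAfc : ContinuousOn Af (Icc 0 Real.pi) := intervalIntegral.continuousOn_primitive hfint
  have hBgc : ContinuousOn Bg (Icc 0 Real.pi) := intervalIntegral.continuousOn_primitive hgint
  obtain ⟨MA, hMA⟩ := isCompact_Icc.exists_bound_of_continuousOn hAfc
  obtain ⟨MB, hMB⟩ := isCompact_Icc.exists_bound_of_continuousOn hBgc
  have hsub : ∀ x ∈ Icc (0:ℝ) Real.pi, Ioc (0:ℝ) x ⊆ Icc (0:ℝ) Real.pi := by
    intro x hx t ht
    exact ⟨ht.1.le, ht.2.trans hx.2⟩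
  -- star of the integral equation for Pp
  have hstar : ∀ x ∈ Icc (0:ℝ) Real.pi, (Pp x)ᴴ = 1 + Af x := by
    intro x hx
    have h0 := hPpint x hx
    calc (Pp x)ᴴ = (1 + ∫ t in (0:ℝ)..x, Q1 t * Pp t)ᴴ := by rw [← h0]
      _ = 1 + (∫ t in (0:ℝ)..x, Q1 t * Pp t)ᴴ := by
          rw [Matrix.conjTranspose_add, Matrix.conjTranspose_one]
      _ = 1 + Af x := by
          congr 1
          rw [intervalIntegral.integral_of_le hx.1]
          have h3 := ContinuousLinearMap.integral_comp_comm (ctLaux m)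
            (hQPp.mono_set (hsub x hx))
          simp only [ctLaux_apply] at h3
          exact h3.symm
  have hPmeq : ∀ x ∈ Icc (0:ℝ) Real.pi, Pm x = 1 - Bg x := by
    intro x hx
    rw [hPmint x hx, intervalIntegral.integral_of_le hx.1]
  -- the integrand h and the total w
  set h : ℝ → Matrix (Fin m) (Fin m) ℂ := fun t => f t * Bg t + Af t * g t with hhdef
  have hBgm : AEStronglyMeasurable Bg (volume.restrict (Icc 0 Real.pi)) :=
    hBgc.aestronglyMeasurable measurableSet_Icc
  have hAfm : AEStronglyMeasurable Af (volume.restrict (Icc 0 Real.pi)) :=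
    hAfc.aestronglyMeasurable measurableSet_Icc
  have hhint : IntegrableOn h (Icc 0 Real.pi) := by
    refine Integrable.add (f := fun t => f t * Bg t) (g := fun t => Af t * g t) ?_ ?_
    · exact mul_int_right hfint hBgm
        (by filter_upwards [ae_restrict_mem measurableSet_Icc] with t ht using hMB t ht)
    · exact mul_int_left hAfm hgint
        (by filter_upwards [ae_restrict_mem measurableSet_Icc] with t ht using hMA t ht)
  set w : ℝ → Matrix (Fin m) (Fin m) ℂ := fun t => f t - g t - h t with hwdef
  have hwint : IntegrableOn w (Icc 0 Real.pi) := (hfint.sub hgint).sub hhint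
  -- the product identity
  have hAB : ∀ x ∈ Icc (0:ℝ) Real.pi, Af x * Bg x = ∫ t in Ioc (0:ℝ) x, h t := by
    intro x hx
    have hfx : IntegrableOn f (Ioc 0 x) := hfint.mono_set (hsub x hx)
    have hgx : IntegrableOn g (Ioc 0 x) := hgint.mono_set (hsub x hx)
    have hco := core_fubini (mulLaux m) hfx hgx
    simp only [mulLaux_apply] at hco
    have hAd : ∀ t ∈ Ioc (0:ℝ) x, (∫ s in Ioc t x, f s) = Af x - Af t := by
      intro t ht
      have h1 : IntervalIntegrable f volume 0 t :=
        (intervalIntegrable_iff_integrableOn_Ioc_of_le ht.1.le).mpr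
          (hfx.mono_set (Ioc_subset_Ioc_right ht.2))
      have h2 : IntervalIntegrable f volume t x :=
        (intervalIntegrable_iff_integrableOn_Ioc_of_le ht.2).mpr
          (hfx.mono_set (Ioc_subset_Ioc_left ht.1.le))
      have h3 := intervalIntegral.integral_add_adjacent_intervals h1 h2
      rw [intervalIntegral.integral_of_le ht.1.le, intervalIntegral.integral_of_le ht.2,
        intervalIntegral.integral_of_le (ht.1.le.trans ht.2)] at h3
      exact eq_sub_of_add_eq' h3
    have hconst : Integrable (fun t => Af x * g t) (volume.restrict (Ioc 0 x)) := by
      refine mul_int_left (M := ‖Af x‖) aestronglyMeasurable_const hgx ?_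
      exact Filter.Eventually.of_forall fun t => le_refl ‖Af x‖
    have hAg : Integrable (fun t => Af t * g t) (volume.restrict (Ioc 0 x)) := by
      refine mul_int_left (M := MA) ((hAfc.mono (hsub x hx)).aestronglyMeasurable measurableSet_Ioc) hgx ?_
      filter_upwards [ae_restrict_mem measurableSet_Ioc] with t ht
      exact hMA t (hsub x hx ht)
    have hco2 : (∫ s in Ioc (0:ℝ) x, f s * Bg s) =
        ∫ t in Ioc (0:ℝ) x, (Af x * g t - Af t * g t) := by
      rw [hco]
      refine setIntegral_congr_fun measurableSet_Ioc fun t ht => ?_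
      rw [hAd t ht, sub_mul]
    rw [integral_sub hconst hAg] at hco2
    have h4 := ContinuousLinearMap.integral_comp_comm (mulLaux m (Af x)) hgx
    simp only [mulLaux_apply] at h4
    have hfB : Integrable (fun t => f t * Bg t) (volume.restrict (Ioc 0 x)) := by
      refine mul_int_right (M := MB) hfx ((hBgc.mono (hsub x hx)).aestronglyMeasurable measurableSet_Ioc) ?_
      filter_upwards [ae_restrict_mem measurableSet_Ioc] with t ht
      exact hMB t (hsub x hx ht)
    have : (∫ t in Ioc (0:ℝ) x, h t) = (∫ t in Ioc (0:ℝ) x, f t * Bg t)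
        + ∫ t in Ioc (0:ℝ) x, Af t * g t := by
      simp only [hhdef]
      exact integral_add hfB hAg
    rw [this, hco2, h4]
    abel
  -- representation of the product
  have hF : ∀ x ∈ Icc (0:ℝ) Real.pi,
      (Pp x)ᴴ * Pm x = 1 + ∫ t in Ioc (0:ℝ) x, w t := by
    intro x hx
    have hfx : IntegrableOn f (Ioc 0 x) := hfint.mono_set (hsub x hx)
    have hgx : IntegrableOn g (Ioc 0 x) := hgint.mono_set (hsub x hx)
    have hhx : IntegrableOn h (Ioc 0 x) := hhint.mono_set (hsub x hx)
    have hw' : (∫ t in Ioc (0:ℝ) x, w t) = Af x - Bg x - ∫ t in Ioc (0:ℝ) x, h t := by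
      calc (∫ t in Ioc (0:ℝ) x, w t)
          = (∫ t in Ioc (0:ℝ) x, (f t - g t)) - ∫ t in Ioc (0:ℝ) x, h t :=
            integral_sub (hfx.sub hgx) hhx
        _ = Af x - Bg x - ∫ t in Ioc (0:ℝ) x, h t := by rw [integral_sub hfx hgx]
    rw [hstar x hx, hPmeq x hx, hw', ← hAB x hx]
    noncomm_ring
  -- the constant
  set W : ℝ := ∫ t in Ioc (0:ℝ) Real.pi, ‖w t‖ with hWdef
  have hW0 : 0 ≤ W := integral_nonneg fun t => norm_nonneg _
  have h10 : (0:ℝ) ≤ ‖(1 : Matrix (Fin m) (Fin m) ℂ)‖ := norm_nonneg _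
  refine ⟨1 + ‖(1 : Matrix (Fin m) (Fin m) ℂ)‖ + W, by linarith, ?_⟩
  intro ρ hρ
  have hρ0 : (0:ℝ) < |ρ| := lt_of_lt_of_le one_pos hρ
  have hρne : (ρ:ℂ) ≠ 0 := by
    refine Complex.ofReal_ne_zero.mpr fun hc => ?_
    rw [hc, abs_zero] at hρ
    linarith
  have hcne : (2 * Complex.I * (ρ:ℂ)) ≠ 0 :=
    mul_ne_zero (mul_ne_zero two_ne_zero Complex.I_ne_zero) hρne
  have hecont : Continuous fun x : ℝ => Complex.exp (2 * Complex.I * (ρ:ℂ) * (x:ℂ)) :=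
    Complex.continuous_exp.comp (continuous_const.mul Complex.continuous_ofReal)
  have hwIoc : IntegrableOn w (Ioc 0 Real.pi) := hwint.mono_set Ioc_subset_Icc_self
  -- first estimate
  have main1 : ‖∫ x in (0:ℝ)..Real.pi, Complex.exp (2 * Complex.I * (ρ : ℂ) * (x : ℂ)) •
      ((Pp x)ᴴ * Pm x)‖ ≤ (‖(1 : Matrix (Fin m) (Fin m) ℂ)‖ + W) / |ρ| := by
    rw [intervalIntegral.integral_of_le hπ]
    have h1int : IntegrableOn (fun x : ℝ => Complex.exp (2 * Complex.I * (ρ:ℂ) * (x:ℂ)) •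
        (1 : Matrix (Fin m) (Fin m) ℂ)) (Ioc 0 Real.pi) :=
      (hecont.smul continuous_const).integrableOn_Ioc
    have h2int : IntegrableOn (fun x : ℝ => Complex.exp (2 * Complex.I * (ρ:ℂ) * (x:ℂ)) •
        (∫ t in Ioc (0:ℝ) x, w t)) (Ioc 0 Real.pi) := by
      refine ((hecont.continuousOn.smul (intervalIntegral.continuousOn_primitive hwint)).integrableOn_compact
        isCompact_Icc).mono_set Ioc_subset_Icc_self
    have hsplit : (∫ x in Ioc (0:ℝ) Real.pi,
        Complex.exp (2 * Complex.I * (ρ:ℂ) * (x:ℂ)) • ((Pp x)ᴴ * Pm x)) =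
        (∫ x in Ioc (0:ℝ) Real.pi, Complex.exp (2 * Complex.I * (ρ:ℂ) * (x:ℂ))) •
          (1 : Matrix (Fin m) (Fin m) ℂ) +
        ∫ t in Ioc (0:ℝ) Real.pi,
          (∫ x in Ioc t Real.pi, Complex.exp (2 * Complex.I * (ρ:ℂ) * (x:ℂ))) • w t := by
      rw [setIntegral_congr_fun measurableSet_Ioc
        (g := fun x : ℝ => Complex.exp (2 * Complex.I * (ρ:ℂ) * (x:ℂ)) •
            (1 : Matrix (Fin m) (Fin m) ℂ) +
          Complex.exp (2 * Complex.I * (ρ:ℂ) * (x:ℂ)) • (∫ t in Ioc (0:ℝ) x, w t))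
        (fun x hx => by rw [hF x (Ioc_subset_Icc_self hx), smul_add])]
      rw [integral_add h1int h2int, integral_smul_const]
      congr 1
      have hco := core_fubini
        (ContinuousLinearMap.lsmul ℂ ℂ (E := Matrix (Fin m) (Fin m) ℂ))
        (hecont.integrableOn_Ioc) hwIoc
      simp only [ContinuousLinearMap.lsmul_apply] at hco
      exact hco
    rw [hsplit]
    have hb1 : ‖(∫ x in Ioc (0:ℝ) Real.pi, Complex.exp (2 * Complex.I * (ρ:ℂ) * (x:ℂ))) •
        (1 : Matrix (Fin m) (Fin m) ℂ)‖ ≤ (1/|ρ|) * ‖(1 : Matrix (Fin m) (Fin m) ℂ)‖ := by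
      rw [norm_smul]
      refine mul_le_mul_of_nonneg_right ?_ h10
      rw [← intervalIntegral.integral_of_le hπ, integral_exp_mul_complex hcne]
      exact exp_div_bound hρ 0 Real.pi
    have hb2 : ‖∫ t in Ioc (0:ℝ) Real.pi,
        (∫ x in Ioc t Real.pi, Complex.exp (2 * Complex.I * (ρ:ℂ) * (x:ℂ))) • w t‖
        ≤ (1/|ρ|) * W := by
      refine le_trans (norm_integral_le_of_norm_le (hwIoc.norm.const_mul (1/|ρ|)) ?_) ?_
      · filter_upwards [ae_restrict_mem measurableSet_Ioc] with t ht
        rw [norm_smul]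
        refine mul_le_mul_of_nonneg_right ?_ (norm_nonneg _)
        rw [← intervalIntegral.integral_of_le ht.2, integral_exp_mul_complex hcne]
        exact exp_div_bound hρ t Real.pi
      · exact le_of_eq (integral_const_mul _ _)
    refine le_trans (norm_add_le _ _) (le_trans (add_le_add hb1 hb2) (le_of_eq ?_))
    field_simp
  constructor
  · refine main1.trans ?_
    gcongr
    linarith
  · -- the second integral is the conjugate transpose of the first
    have hii : IntervalIntegrable (fun x => Complex.exp (2 * Complex.I * (ρ:ℂ) * (x:ℂ)) •
        ((Pp x)ᴴ * Pm x)) volume 0 Real.pi := by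
      apply ContinuousOn.intervalIntegrable
      rw [uIcc_of_le hπ]
      refine hecont.continuousOn.smul ?_
      have hPs : ContinuousOn (fun x => (Pp x)ᴴ) (Icc 0 Real.pi) :=
        (ctLaux m).continuous.comp_continuousOn hPpcont
      have hc : ContinuousOn (fun x => (Pp x)ᴴ * Pm x) (Icc 0 Real.pi) := hPs.mul hPmcont
      exact hc
    have key : (∫ x in (0:ℝ)..Real.pi,
        Complex.exp (-(2 * Complex.I * (ρ:ℂ) * (x:ℂ))) • ((Pm x)ᴴ * Pp x)) =
        ctLaux m (∫ x in (0:ℝ)..Real.pi,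
          Complex.exp (2 * Complex.I * (ρ:ℂ) * (x:ℂ)) • ((Pp x)ᴴ * Pm x)) := by
      rw [← ContinuousLinearMap.intervalIntegral_comp_comm (ctLaux m) hii]
      refine intervalIntegral.integral_congr fun x hx => ?_
      simp only [ctLaux_apply]
      rw [Matrix.conjTranspose_smul, Matrix.conjTranspose_mul,
        Matrix.conjTranspose_conjTranspose]
      congr 1
      have hz : (starRingEnd ℂ) (2 * Complex.I * (ρ:ℂ) * (x:ℂ)) =
          -(2 * Complex.I * (ρ:ℂ) * (x:ℂ)) := by
        simp only [_root_.map_mul, Complex.conj_I, Complex.conj_ofReal, map_ofNat]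
        ring
      calc Complex.exp (-(2 * Complex.I * (ρ:ℂ) * (x:ℂ)))
          = Complex.exp ((starRingEnd ℂ) (2 * Complex.I * (ρ:ℂ) * (x:ℂ))) := by rw [hz]
        _ = (starRingEnd ℂ) (Complex.exp (2 * Complex.I * (ρ:ℂ) * (x:ℂ))) := Complex.exp_conj _
        _ = star (Complex.exp (2 * Complex.I * (ρ:ℂ) * (x:ℂ))) := rfl
    rw [key, ctLaux_apply, Matrix.norm_conjTranspose]
    refine main1.trans ?_
    gcongr
    linarith
end

section
/- Let m ≥ 1 and ρ ∈ ℝ. Let Q_1, Q_0 : [0,π] → ℂ^{m×m} be integrable with Q_1(x)† = −Q_1(x), Q_0(x)† = Q_0(x) a.e., and let h_1, h_0, H_1, H_0 ∈ ℂ^{m×m} with h_1† = −h_1, H_1† = −H_1, h_0† = h_0, H_0† = H_0. Let φ(·,ρ) be the matrix solution of Y″ + (ρ²I + 2iρQ_1(x) + Q_0(x))Y = 0 with φ(0,ρ) = I, φ′(0,ρ) = −(iρh_1 + h_0), and let ψ(·,ρ) be the matrix solution of the same equation with ψ(π,ρ) = I, ψ′(π,ρ) = −(iρH_1 + H_0).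 Then (ψ′(0,ρ) + (iρh_1 + h_0)ψ(0,ρ))† = −(φ′(π,ρ) + (iρH_1 + H_0)φ(π,ρ)), i.e. (U(ψ))† = −V(φ). -/
open Matrix MeasureTheory Set

attribute [local instance] Matrix.normedAddCommGroup Matrix.normedSpace

/-- The matrix coefficient `ρ²I + 2iρQ₁(x) + Q₀(x)` of the pencil. -/
noncomputable def pencilPot (m : ℕ) (Q1 Q0 : ℝ → Matrix (Fin m) (Fin m) ℂ) (ρ : ℂ) (x : ℝ) :
    Matrix (Fin m) (Fin m) ℂ :=
  ρ ^ 2 • (1 : Matrix (Fin m) (Fin m) ℂ) + (2 * Complex.I * ρ) • Q1 x + Q0 x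

/-- `Y` (with derivative `Z`) is an absolutely continuous `ℂᵐ`-valued solution of
`Y'' + (ρ²I + 2iρQ₁(x) + Q₀(x))Y = 0` on `[0,π]`, encoded by integral equations. -/
def IsVecSol (m : ℕ) (Q1 Q0 : ℝ → Matrix (Fin m) (Fin m) ℂ) (ρ : ℂ)
    (Y Z : ℝ → Fin m → ℂ) : Prop :=
  ContinuousOn Y (Icc 0 Real.pi) ∧ ContinuousOn Z (Icc 0 Real.pi) ∧
  (∀ x ∈ Icc 0 Real.pi, Y x = Y 0 + ∫ t in (0:ℝ)..x, Z t) ∧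
  (∀ x ∈ Icc 0 Real.pi, Z x = Z 0 - ∫ t in (0:ℝ)..x, (pencilPot m Q1 Q0 ρ t).mulVec (Y t))

/-- `ρ` is an eigenvalue of the pencil `L`: there is a not identically zero absolutely
continuous solution of the equation satisfying both boundary conditions. -/
def IsEigenvalue (m : ℕ) (Q1 Q0 : ℝ → Matrix (Fin m) (Fin m) ℂ)
    (h1 h0 H1 H0 : Matrix (Fin m) (Fin m) ℂ) (ρ : ℂ) : Prop :=
  ∃ Y Z : ℝ → Fin m → ℂ,
    IsVecSol m Q1 Q0 ρ Y Z ∧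
    Z 0 + ((Complex.I * ρ) • h1 + h0).mulVec (Y 0) = 0 ∧
    Z Real.pi + ((Complex.I * ρ) • H1 + H0).mulVec (Y Real.pi) = 0 ∧
    ¬ (∀ x ∈ Icc 0 Real.pi, Y x = 0)

/-- `F` (with derivative `G`) is an absolutely continuous matrix solution of
`F'' + (ρ²I + 2iρQ₁(x) + Q₀(x))F = 0` on `[0,π]`, encoded by integral equations. -/
def IsMatSol (m : ℕ) (Q1 Q0 : ℝ → Matrix (Fin m) (Fin m) ℂ) (ρ : ℂ)
    (F G : ℝ → Matrix (Fin m) (Fin m) ℂ) : Prop :=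
  ContinuousOn F (Icc 0 Real.pi) ∧ ContinuousOn G (Icc 0 Real.pi) ∧
  (∀ x ∈ Icc 0 Real.pi, F x = F 0 + ∫ t in (0:ℝ)..x, G t) ∧
  (∀ x ∈ Icc 0 Real.pi, G x = G 0 - ∫ t in (0:ℝ)..x, pencilPot m Q1 Q0 ρ t * F t)


section Aux

variable {E F G : Type*} [NormedAddCommGroup E] [NormedAddCommGroup F] [NormedAddCommGroup G]
  [NormedSpace ℝ E] [NormedSpace ℝ F] [NormedSpace ℝ G]

lemma integrable_prod_clm2 {α β : Type*} [MeasurableSpace α] [MeasurableSpace β]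
    {μ : Measure α} {ν : Measure β} [SFinite μ] [SFinite ν]
    (B : E →L[ℝ] F →L[ℝ] G) {f : α → E} {g : β → F}
    (hf : Integrable f μ) (hg : Integrable g ν) :
    Integrable (fun z : α × β => B (f z.1) (g z.2)) (μ.prod ν) := by
  have hm : AEStronglyMeasurable (fun z : α × β => B (f z.1) (g z.2)) (μ.prod ν) :=
    B.aestronglyMeasurable_comp₂ hf.1.comp_fst hg.1.comp_snd
  refine ((hf.norm.mul_prod hg.norm).const_mul ‖B‖).mono' hm
    (Filter.Eventually.of_forall fun z => ?_)
  calc ‖B (f z.1) (g z.2)‖ ≤ ‖B‖ * ‖f z.1‖ * ‖g z.2‖ := B.le_opNorm₂ _ _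
    _ = ‖B‖ * (‖f z.1‖ * ‖g z.2‖) := by ring

lemma integrableOn_clm2 (B : E →L[ℝ] F →L[ℝ] G) {f : ℝ → E} {g : ℝ → F} {a b : ℝ}
    (hf : IntegrableOn f (Icc a b)) (hg : ContinuousOn g (Icc a b)) :
    IntegrableOn (fun t => B (f t) (g t)) (Icc a b) := by
  obtain ⟨C, hC⟩ := isCompact_Icc.exists_bound_of_continuousOn hg
  have hm : AEStronglyMeasurable (fun t => B (f t) (g t)) (volume.restrict (Icc a b)) :=
    B.aestronglyMeasurable_comp₂ hf.1 (hg.aestronglyMeasurable measurableSet_Icc)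
  refine (hf.norm.const_mul (‖B‖ * C)).mono' hm ?_
  filter_upwards [ae_restrict_mem measurableSet_Icc] with t ht
  calc ‖B (f t) (g t)‖ ≤ ‖B‖ * ‖f t‖ * ‖g t‖ := B.le_opNorm₂ _ _
    _ ≤ ‖B‖ * ‖f t‖ * C := by
        have h0 : (0:ℝ) ≤ ‖B‖ * ‖f t‖ := by positivity
        exact mul_le_mul_of_nonneg_left (hC t ht) h0
    _ = ‖B‖ * C * ‖f t‖ := by ring

lemma integrableOn_clm2' (B : E →L[ℝ] F →L[ℝ] G) {f : ℝ → E} {g : ℝ → F} {a b : ℝ}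
    (hf : ContinuousOn f (Icc a b)) (hg : IntegrableOn g (Icc a b)) :
    IntegrableOn (fun t => B (f t) (g t)) (Icc a b) := by
  have := integrableOn_clm2 B.flip hg hf
  simpa only [ContinuousLinearMap.flip_apply] using this

lemma core_fubini_s12 [CompleteSpace E] [CompleteSpace F] [CompleteSpace G]
    (B : E →L[ℝ] F →L[ℝ] G) {f : ℝ → E} {g : ℝ → F} {a b : ℝ}
    (hf : IntegrableOn f (Ioc a b)) (hg : IntegrableOn g (Ioc a b)) :
    ((∫ t in Ioc a b, B (f t) (∫ s in Ioc a t, g s)) +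
      ∫ t in Ioc a b, B (∫ s in Ioc a t, f s) (g t)) =
      B (∫ t in Ioc a b, f t) (∫ t in Ioc a b, g t) := by
  have hf' : Integrable f (volume.restrict (Ioc a b)) := hf
  have hg' : Integrable g (volume.restrict (Ioc a b)) := hg
  have hX : Integrable (fun z : ℝ × ℝ => B (f z.1) (g z.2))
      ((volume.restrict (Ioc a b)).prod (volume.restrict (Ioc a b))) :=
    integrable_prod_clm2 B hf' hg'
  have hS : MeasurableSet {p : ℝ × ℝ | p.2 ≤ p.1} :=
    measurableSet_le measurable_snd measurable_fst
  have hS' : MeasurableSet {p : ℝ × ℝ | p.1 < p.2} :=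
    measurableSet_lt measurable_fst measurable_snd
  have hS'' : MeasurableSet {p : ℝ × ℝ | p.2 < p.1} :=
    measurableSet_lt measurable_snd measurable_fst
  have key1 : (∫ t in Ioc a b, B (f t) (∫ s in Ioc a t, g s)) =
      ∫ z, ({p : ℝ × ℝ | p.2 ≤ p.1}).indicator (fun p => B (f p.1) (g p.2)) z
        ∂((volume.restrict (Ioc a b)).prod (volume.restrict (Ioc a b))) := by
    have step2 : (∫ t in Ioc a b, ∫ s in Ioc a b,
        ({p : ℝ × ℝ | p.2 ≤ p.1}).indicator (fun p => B (f p.1) (g p.2)) (t, s)) =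
        ∫ z, ({p : ℝ × ℝ | p.2 ≤ p.1}).indicator (fun p => B (f p.1) (g p.2)) z
          ∂((volume.restrict (Ioc a b)).prod (volume.restrict (Ioc a b))) := by
      have h := MeasureTheory.integral_integral
        (f := fun t s => ({p : ℝ × ℝ | p.2 ≤ p.1}).indicator
          (fun p => B (f p.1) (g p.2)) (t, s)) (by exact hX.indicator hS)
      rw [h]
    rw [← step2]
    refine setIntegral_congr_fun measurableSet_Ioc fun t ht => ?_
    have h2 : (∫ s in Ioc a t, g s) = ∫ s in Ioc a b, (Iic t).indicator g s := by
      rw [setIntegral_indicator measurableSet_Iic, Set.Ioc_inter_Iic, inf_eq_right.mpr ht.2]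
    rw [h2, ← (B (f t)).integral_comp_comm (hg'.indicator measurableSet_Iic)]
    refine integral_congr_ae (Filter.Eventually.of_forall fun s => ?_)
    by_cases h : s ≤ t <;> simp [Set.indicator_apply, h]
  have key2 : (∫ t in Ioc a b, B (∫ s in Ioc a t, f s) (g t)) =
      ∫ z, ({p : ℝ × ℝ | p.2 < p.1}).indicator (fun p => B (f p.2) (g p.1)) z
        ∂((volume.restrict (Ioc a b)).prod (volume.restrict (Ioc a b))) := by
    have hY : Integrable (fun z : ℝ × ℝ => B (f z.2) (g z.1))
        ((volume.restrict (Ioc a b)).prod (volume.restrict (Ioc a b))) := by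
      have := integrable_prod_clm2 B.flip hg' hf'
      simpa only [ContinuousLinearMap.flip_apply] using this
    have step2 : (∫ t in Ioc a b, ∫ s in Ioc a b,
        ({p : ℝ × ℝ | p.2 < p.1}).indicator (fun p => B (f p.2) (g p.1)) (t, s)) =
        ∫ z, ({p : ℝ × ℝ | p.2 < p.1}).indicator (fun p => B (f p.2) (g p.1)) z
          ∂((volume.restrict (Ioc a b)).prod (volume.restrict (Ioc a b))) := by
      have h := MeasureTheory.integral_integral
        (f := fun t s => ({p : ℝ × ℝ | p.2 < p.1}).indicator
          (fun p => B (f p.2) (g p.1)) (t, s)) (by exact hY.indicator hS'')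
      rw [h]
    rw [← step2]
    refine setIntegral_congr_fun measurableSet_Ioc fun t ht => ?_
    have h2 : (∫ s in Ioc a t, f s) = ∫ s in Ioc a b, (Iio t).indicator f s := by
      rw [setIntegral_indicator measurableSet_Iio]
      have he : Ioc a b ∩ Iio t = Ioo a t := by
        ext s
        simp only [Set.mem_inter_iff, Set.mem_Ioc, Set.mem_Iio, Set.mem_Ioo]
        exact ⟨fun h => ⟨h.1.1, h.2⟩, fun h => ⟨⟨h.1, h.2.le.trans ht.2⟩, h.2⟩⟩
      rw [he, ← integral_Ioc_eq_integral_Ioo]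
    rw [h2, show B (∫ s in Ioc a b, (Iio t).indicator f s) (g t)
          = B.flip (g t) (∫ s in Ioc a b, (Iio t).indicator f s) from rfl,
      ← (B.flip (g t)).integral_comp_comm (hf'.indicator measurableSet_Iio)]
    refine integral_congr_ae (Filter.Eventually.of_forall fun s => ?_)
    by_cases h : s < t <;> simp [Set.indicator_apply, h]
  have hswap : (∫ z, ({p : ℝ × ℝ | p.2 < p.1}).indicator (fun p => B (f p.2) (g p.1)) z
        ∂((volume.restrict (Ioc a b)).prod (volume.restrict (Ioc a b)))) =
      ∫ z, ({p : ℝ × ℝ | p.1 < p.2}).indicator (fun p => B (f p.1) (g p.2)) z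
        ∂((volume.restrict (Ioc a b)).prod (volume.restrict (Ioc a b))) := by
    rw [← MeasureTheory.integral_prod_swap
      (f := fun z : ℝ × ℝ => ({p : ℝ × ℝ | p.1 < p.2}).indicator (fun p => B (f p.1) (g p.2)) z)]
    refine integral_congr_ae (Filter.Eventually.of_forall fun z => ?_)
    by_cases h : z.2 < z.1 <;> simp [Set.indicator_apply, h, Prod.swap]
  rw [key1, key2, hswap, ← integral_add (hX.indicator hS) (hX.indicator hS')]
  have hpt : (fun z : ℝ × ℝ =>
      ({p : ℝ × ℝ | p.2 ≤ p.1}).indicator (fun p => B (f p.1) (g p.2)) z +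
      ({p : ℝ × ℝ | p.1 < p.2}).indicator (fun p => B (f p.1) (g p.2)) z) =
      fun z : ℝ × ℝ => B (f z.1) (g z.2) := by
    funext z
    by_cases h : z.2 ≤ z.1
    · simp [Set.indicator_apply, h, not_lt.mpr h]
    · simp [Set.indicator_apply, h, lt_of_not_ge h]
  rw [hpt]
  have h5 := MeasureTheory.integral_integral (f := fun t s => B (f t) (g s)) hX
  rw [← h5]
  have h4 : ∀ t, (∫ s in Ioc a b, B (f t) (g s)) = B (f t) (∫ s in Ioc a b, g s) :=
    fun t => (B (f t)).integral_comp_comm hg'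
  simp_rw [h4]
  exact (B.flip (∫ s in Ioc a b, g s)).integral_comp_comm hf'

lemma parts_clm [CompleteSpace E] [CompleteSpace F] [CompleteSpace G]
    (B : E →L[ℝ] F →L[ℝ] G) {f : ℝ → E} {g : ℝ → F} {U : ℝ → E} {V : ℝ → F} {a b : ℝ}
    (hab : a ≤ b)
    (hf : IntegrableOn f (Icc a b)) (hg : IntegrableOn g (Icc a b))
    (hU : ∀ x ∈ Icc a b, U x = U a + ∫ t in a..x, f t)
    (hV : ∀ x ∈ Icc a b, V x = V a + ∫ t in a..x, g t) :
    (∫ t in a..b, (B (f t) (V t) + B (U t) (g t))) = B (U b) (V b) - B (U a) (V a) := by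
  have hf' : IntegrableOn f (Ioc a b) := hf.mono_set Ioc_subset_Icc_self
  have hg' : IntegrableOn g (Ioc a b) := hg.mono_set Ioc_subset_Icc_self
  have hPf : ContinuousOn (fun x => ∫ t in a..x, f t) (Icc a b) := by
    have h := intervalIntegral.continuousOn_primitive_interval
      (show IntegrableOn f (uIcc a b) volume by rwa [uIcc_of_le hab])
    rwa [uIcc_of_le hab] at h
  have hPg : ContinuousOn (fun x => ∫ t in a..x, g t) (Icc a b) := by
    have h := intervalIntegral.continuousOn_primitive_interval
      (show IntegrableOn g (uIcc a b) volume by rwa [uIcc_of_le hab])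
    rwa [uIcc_of_le hab] at h
  have i1 : IntegrableOn (fun t => B (f t) (V a)) (Ioc a b) :=
    (integrableOn_clm2 B hf continuousOn_const).mono_set Ioc_subset_Icc_self
  have i2 : IntegrableOn (fun t => B (f t) (∫ s in a..t, g s)) (Ioc a b) :=
    (integrableOn_clm2 B hf hPg).mono_set Ioc_subset_Icc_self
  have i3 : IntegrableOn (fun t => B (U a) (g t)) (Ioc a b) :=
    (integrableOn_clm2' B continuousOn_const hg).mono_set Ioc_subset_Icc_self
  have i4 : IntegrableOn (fun t => B (∫ s in a..t, f s) (g t)) (Ioc a b) :=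
    (integrableOn_clm2' B hPf hg).mono_set Ioc_subset_Icc_self
  rw [intervalIntegral.integral_of_le hab]
  have hcongr : (∫ t in Ioc a b, (B (f t) (V t) + B (U t) (g t))) =
      ∫ t in Ioc a b, ((B (f t) (V a) + B (f t) (∫ s in a..t, g s)) +
        (B (U a) (g t) + B (∫ s in a..t, f s) (g t))) := by
    refine setIntegral_congr_fun measurableSet_Ioc fun t ht => ?_
    have htI : t ∈ Icc a b := Ioc_subset_Icc_self ht
    rw [hU t htI, hV t htI]
    simp [map_add, ContinuousLinearMap.add_apply]
  have I12 : Integrable (fun t => B (f t) (V a) + B (f t) (∫ s in a..t, g s))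
      (volume.restrict (Ioc a b)) := i1.add i2
  have I34 : Integrable (fun t => B (U a) (g t) + B (∫ s in a..t, f s) (g t))
      (volume.restrict (Ioc a b)) := i3.add i4
  rw [hcongr, integral_add I12 I34, integral_add i1 i2, integral_add i3 i4]
  have e1 : (∫ t in Ioc a b, B (f t) (V a)) = B (∫ t in Ioc a b, f t) (V a) :=
    (B.flip (V a)).integral_comp_comm hf'
  have e3 : (∫ t in Ioc a b, B (U a) (g t)) = B (U a) (∫ t in Ioc a b, g t) :=
    (B (U a)).integral_comp_comm hg'
  have c2 : (∫ t in Ioc a b, B (f t) (∫ s in a..t, g s)) =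
      ∫ t in Ioc a b, B (f t) (∫ s in Ioc a t, g s) :=
    setIntegral_congr_fun measurableSet_Ioc fun t ht => by
      rw [intervalIntegral.integral_of_le ht.1.le]
  have c4 : (∫ t in Ioc a b, B (∫ s in a..t, f s) (g t)) =
      ∫ t in Ioc a b, B (∫ s in Ioc a t, f s) (g t) :=
    setIntegral_congr_fun measurableSet_Ioc fun t ht => by
      rw [intervalIntegral.integral_of_le ht.1.le]
  rw [hU b (right_mem_Icc.2 hab), hV b (right_mem_Icc.2 hab)]
  simp only [intervalIntegral.integral_of_le hab]
  rw [e1, e3]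
  calc (B (∫ t in Ioc a b, f t) (V a) + ∫ t in Ioc a b, B (f t) (∫ s in a..t, g s)) +
        (B (U a) (∫ t in Ioc a b, g t) + ∫ t in Ioc a b, B (∫ s in a..t, f s) (g t)) =
      (B (∫ t in Ioc a b, f t) (V a) + B (U a) (∫ t in Ioc a b, g t)) +
        ((∫ t in Ioc a b, B (f t) (∫ s in Ioc a t, g s)) +
          ∫ t in Ioc a b, B (∫ s in Ioc a t, f s) (g t)) := by
        rw [← c2, ← c4]; abel
    _ = (B (∫ t in Ioc a b, f t) (V a) + B (U a) (∫ t in Ioc a b, g t)) +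
          B (∫ t in Ioc a b, f t) (∫ t in Ioc a b, g t) := by
        rw [core_fubini_s12 B hf' hg']
    _ = B (U a + ∫ t in Ioc a b, f t) (V a + ∫ t in Ioc a b, g t) - B (U a) (V a) := by
        simp only [map_add, ContinuousLinearMap.add_apply]
        abel


end Aux

noncomputable def mulCLM (m : ℕ) : Matrix (Fin m) (Fin m) ℂ →L[ℝ]
    Matrix (Fin m) (Fin m) ℂ →L[ℝ] Matrix (Fin m) (Fin m) ℂ :=
  LinearMap.toContinuousLinearMap
  { toFun := fun A => LinearMap.toContinuousLinearMap
      { toFun := fun B => A * B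
        map_add' := fun B C => Matrix.mul_add A B C
        map_smul' := fun c B => by simp [Matrix.mul_smul] }
    map_add' := fun A A' => by
      apply ContinuousLinearMap.ext; intro B
      simp [Matrix.add_mul]
    map_smul' := fun c A => by
      apply ContinuousLinearMap.ext; intro B
      simp [Matrix.smul_mul] }

@[simp] lemma mulCLM_apply (m : ℕ) (A B : Matrix (Fin m) (Fin m) ℂ) :
    mulCLM m A B = A * B := rfl

noncomputable def ctCLM (m : ℕ) : Matrix (Fin m) (Fin m) ℂ →L[ℝ] Matrix (Fin m) (Fin m) ℂ :=
  LinearMap.toContinuousLinearMap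
  { toFun := fun A => Aᴴ
    map_add' := fun A B => Matrix.conjTranspose_add A B
    map_smul' := fun c A => by
      ext i j
      simp [Matrix.conjTranspose_apply, star_smul] }

@[simp] lemma ctCLM_apply (m : ℕ) (A : Matrix (Fin m) (Fin m) ℂ) : ctCLM m A = Aᴴ := rfl

/-- (Identity (UV).) For real `ρ`, under condition (II), with `φ(·,ρ)` the
solution normalized at `0` and `ψ(·,ρ)` the solution normalized at `π` by `ψ(π,ρ) = I`,
`ψ'(π,ρ) = -(iρH₁ + H₀)`, one has `(U(ψ))ᴴ = -V(φ)`. -/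
theorem U_psi_conjTranspose_eq_neg_V_phi (m : ℕ) (hm : 1 ≤ m) (ρ : ℝ)
    (Q1 Q0 : ℝ → Matrix (Fin m) (Fin m) ℂ)
    (h1 h0 H1 H0 : Matrix (Fin m) (Fin m) ℂ)
    (hQ1 : @IntegrableOn ℝ (Matrix (Fin m) (Fin m) ℂ) _ _
      SeminormedAddGroup.toContinuousENorm Q1 (Icc 0 Real.pi) volume)
    (hQ0 : @IntegrableOn ℝ (Matrix (Fin m) (Fin m) ℂ) _ _
      SeminormedAddGroup.toContinuousENorm Q0 (Icc 0 Real.pi) volume)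
    (hQ1skew : ∀ᵐ x ∂(volume.restrict (Icc 0 Real.pi)), (Q1 x)ᴴ = -Q1 x)
    (hQ0herm : ∀ᵐ x ∂(volume.restrict (Icc 0 Real.pi)), (Q0 x)ᴴ = Q0 x)
    (hh1 : h1ᴴ = -h1) (hH1 : H1ᴴ = -H1) (hh0 : h0ᴴ = h0) (hH0 : H0ᴴ = H0)
    (φ φ' ψ ψ' : ℝ → Matrix (Fin m) (Fin m) ℂ)
    (hφ : IsMatSol m Q1 Q0 (ρ : ℂ) φ φ')
    (hφ0 : φ 0 = 1) (hφ'0 : φ' 0 = -((Complex.I * (ρ : ℂ)) • h1 + h0))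
    (hψ : IsMatSol m Q1 Q0 (ρ : ℂ) ψ ψ')
    (hψπ : ψ Real.pi = 1)
    (hψ'π : ψ' Real.pi = -((Complex.I * (ρ : ℂ)) • H1 + H0)) :
    (ψ' 0 + ((Complex.I * (ρ : ℂ)) • h1 + h0) * ψ 0)ᴴ =
      -(φ' Real.pi + ((Complex.I * (ρ : ℂ)) • H1 + H0) * φ Real.pi) := by
  letI : NormedAddCommGroup (Matrix (Fin m) (Fin m) ℂ) := Matrix.normedAddCommGroup
  letI : NormedSpace ℝ (Matrix (Fin m) (Fin m) ℂ) := Matrix.normedSpace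
  letI : ContinuousENorm (Matrix (Fin m) (Fin m) ℂ) := SeminormedAddGroup.toContinuousENorm
  letI : ENormedAddCommMonoid (Matrix (Fin m) (Fin m) ℂ) := NormedAddCommGroup.toENormedAddCommMonoid
  haveI : TopologicalSpace.PseudoMetrizableSpace (Matrix (Fin m) (Fin m) ℂ) :=
    UniformSpace.pseudoMetrizableSpace (u := PseudoMetricSpace.toUniformSpace)
  obtain ⟨hφc, hφ'c, hφeq, hφ'eq⟩ := hφ
  obtain ⟨hψc, hψ'c, hψeq, hψ'eq⟩ := hψ
  have hab : (0:ℝ) ≤ Real.pi := Real.pi_pos.le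
  set A := (Complex.I * (ρ : ℂ)) • h1 + h0 with hAdef
  set Bm := (Complex.I * (ρ : ℂ)) • H1 + H0 with hBdef
  set Pn : ℝ → Matrix (Fin m) (Fin m) ℂ := pencilPot m Q1 Q0 (ρ : ℂ) with hPn
  have hP : IntegrableOn Pn (Icc 0 Real.pi) := by
    rw [hPn]
    have hcst : IntegrableOn (fun _ : ℝ => ((ρ:ℂ)^2) • (1 : Matrix (Fin m) (Fin m) ℂ))
        (Icc 0 Real.pi) := integrableOn_const (isCompact_Icc.measure_lt_top).ne
    exact (hcst.add (hQ1.smul ((2:ℂ) * Complex.I * (ρ:ℂ)))).add hQ0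
  have hψHc : ContinuousOn (fun t => (ψ t)ᴴ) (Icc 0 Real.pi) :=
    (ctCLM m).continuous.comp_continuousOn hψc
  have hψ'Hc : ContinuousOn (fun t => (ψ' t)ᴴ) (Icc 0 Real.pi) :=
    (ctCLM m).continuous.comp_continuousOn hψ'c
  have hPφ : IntegrableOn (fun t => Pn t * φ t) (Icc 0 Real.pi) := by
    have := integrableOn_clm2 (mulCLM m) hP hφc
    exact this
  have hPψ : IntegrableOn (fun t => Pn t * ψ t) (Icc 0 Real.pi) := by
    have := integrableOn_clm2 (mulCLM m) hP hψc
    exact this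
  have hIocsub : ∀ x ∈ Icc (0:ℝ) Real.pi, Ioc (0:ℝ) x ⊆ Icc (0:ℝ) Real.pi :=
    fun x hx s hs => ⟨hs.1.le, hs.2.trans hx.2⟩
  have hψ'ii : ∀ x ∈ Icc (0:ℝ) Real.pi, IntervalIntegrable ψ' volume 0 x := fun x hx => by
    apply ContinuousOn.intervalIntegrable
    rw [uIcc_of_le hx.1]
    exact hψ'c.mono (Icc_subset_Icc le_rfl hx.2)
  have hPψii : ∀ x ∈ Icc (0:ℝ) Real.pi, IntervalIntegrable (fun t => Pn t * ψ t) volume 0 x :=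
    fun x hx => (intervalIntegrable_iff_integrableOn_Ioc_of_le hx.1).2
      (hPψ.mono_set (hIocsub x hx))
  have hct : ∀ (u : ℝ → Matrix (Fin m) (Fin m) ℂ) (x : ℝ), IntervalIntegrable u volume 0 x →
      (∫ t in (0:ℝ)..x, u t)ᴴ = ∫ t in (0:ℝ)..x, (u t)ᴴ := fun u x hu => by
    exact ((ctCLM m).intervalIntegral_comp_comm hu).symm
  have hU1 : ∀ x ∈ Icc (0:ℝ) Real.pi,
      (fun t => (ψ t)ᴴ) x = (fun t => (ψ t)ᴴ) 0 + ∫ t in (0:ℝ)..x, (ψ' t)ᴴ := fun x hx => by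
    simp only
    rw [hψeq x hx, Matrix.conjTranspose_add, hct ψ' x (hψ'ii x hx)]
  have hV1 : ∀ x ∈ Icc (0:ℝ) Real.pi, φ' x = φ' 0 + ∫ t in (0:ℝ)..x, -(Pn t * φ t) :=
    fun x hx => by
    rw [hφ'eq x hx, intervalIntegral.integral_neg, sub_eq_add_neg]
  have hU2 : ∀ x ∈ Icc (0:ℝ) Real.pi,
      (fun t => (ψ' t)ᴴ) x = (fun t => (ψ' t)ᴴ) 0 + ∫ t in (0:ℝ)..x, (-(Pn t * ψ t))ᴴ :=
    fun x hx => by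
    simp only
    rw [hψ'eq x hx, sub_eq_add_neg, ← intervalIntegral.integral_neg, Matrix.conjTranspose_add,
      hct (fun t => -(Pn t * ψ t)) x
        (by exact (hPψii x hx).neg : IntervalIntegrable (fun t => -(Pn t * ψ t)) volume 0 x)]
  have hfψ'H : IntegrableOn (fun t => (ψ' t)ᴴ) (Icc 0 Real.pi) := hψ'Hc.integrableOn_Icc
  have hgPφ : IntegrableOn (fun t => -(Pn t * φ t)) (Icc 0 Real.pi) := hPφ.neg
  have hfPψH : IntegrableOn (fun t => (-(Pn t * ψ t))ᴴ) (Icc 0 Real.pi) := by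
    have := (ctCLM m).integrable_comp hPψ.neg
    exact this
  have hgφ' : IntegrableOn φ' (Icc 0 Real.pi) := hφ'c.integrableOn_Icc
  have p1 := parts_clm (mulCLM m) hab hfψ'H hgPφ hU1 hV1
  have p2 := parts_clm (mulCLM m) hab hfPψH hgφ' hU2 hφeq
  change (∫ t in (0:ℝ)..Real.pi, ((ψ' t)ᴴ * φ' t + (ψ t)ᴴ * -(Pn t * φ t))) =
    (ψ Real.pi)ᴴ * φ' Real.pi - (ψ 0)ᴴ * φ' 0 at p1
  change (∫ t in (0:ℝ)..Real.pi, ((-(Pn t * ψ t))ᴴ * φ t + (ψ' t)ᴴ * φ' t)) =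
    (ψ' Real.pi)ᴴ * φ Real.pi - (ψ' 0)ᴴ * φ 0 at p2
  have iA : IntegrableOn (fun t => (ψ' t)ᴴ * φ' t) (Icc 0 Real.pi) := by
    have := integrableOn_clm2 (mulCLM m) hfψ'H hφ'c
    exact this
  have iB : IntegrableOn (fun t => (ψ t)ᴴ * -(Pn t * φ t)) (Icc 0 Real.pi) := by
    have := integrableOn_clm2' (mulCLM m) hψHc hgPφ
    exact this
  have iC : IntegrableOn (fun t => (-(Pn t * ψ t))ᴴ * φ t) (Icc 0 Real.pi) := by
    have := integrableOn_clm2 (mulCLM m) hfPψH hφc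
    exact this
  have iAB : IntegrableOn (fun t => (ψ' t)ᴴ * φ' t + (ψ t)ᴴ * -(Pn t * φ t))
      (Icc 0 Real.pi) := iA.add iB
  have iCA : IntegrableOn (fun t => (-(Pn t * ψ t))ᴴ * φ t + (ψ' t)ᴴ * φ' t)
      (Icc 0 Real.pi) := iC.add iA
  have i_1 : IntervalIntegrable (fun t => (ψ' t)ᴴ * φ' t + (ψ t)ᴴ * -(Pn t * φ t))
      volume 0 Real.pi :=
    (intervalIntegrable_iff_integrableOn_Ioc_of_le hab).2
      (iAB.mono_set Ioc_subset_Icc_self)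
  have i_2 : IntervalIntegrable (fun t => (-(Pn t * ψ t))ᴴ * φ t + (ψ' t)ᴴ * φ' t)
      volume 0 Real.pi :=
    (intervalIntegrable_iff_integrableOn_Ioc_of_le hab).2
      (iCA.mono_set Ioc_subset_Icc_self)
  have hsym : ∀ᵐ t ∂(volume.restrict (Icc 0 Real.pi)), (Pn t)ᴴ = Pn t := by
    filter_upwards [hQ1skew, hQ0herm] with t ha hb
    rw [hPn]
    simp only [pencilPot, Matrix.conjTranspose_add, Matrix.conjTranspose_smul, ha, hb,
      Matrix.conjTranspose_one]
    rw [show star ((ρ:ℂ)^2) = (ρ:ℂ)^2 by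
        simp [Complex.star_def, map_pow, Complex.conj_ofReal],
      show star (2 * Complex.I * (ρ:ℂ)) = -(2 * Complex.I * (ρ:ℂ)) by
        simp [Complex.star_def, Complex.conj_I, Complex.conj_ofReal]]
    simp [neg_smul, smul_neg]
  have key : (ψ Real.pi)ᴴ * φ' Real.pi - (ψ 0)ᴴ * φ' 0 -
      ((ψ' Real.pi)ᴴ * φ Real.pi - (ψ' 0)ᴴ * φ 0) = 0 := by
    rw [← p1, ← p2, ← intervalIntegral.integral_sub i_1 i_2,
      intervalIntegral.integral_of_le hab]
    apply MeasureTheory.integral_eq_zero_of_ae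
    have hsymIoc : ∀ᵐ t ∂(volume.restrict (Ioc (0:ℝ) Real.pi)), (Pn t)ᴴ = Pn t :=
      ae_restrict_of_ae_restrict_of_subset Ioc_subset_Icc_self hsym
    filter_upwards [hsymIoc] with t hsymt
    simp only [Pi.zero_apply]
    rw [Matrix.conjTranspose_neg, Matrix.conjTranspose_mul, hsymt]
    noncomm_ring
  have hA : Aᴴ = A := by
    rw [hAdef, Matrix.conjTranspose_add, Matrix.conjTranspose_smul, hh1, hh0,
      show star (Complex.I * (ρ:ℂ)) = -(Complex.I * (ρ:ℂ)) by
        simp [Complex.star_def, Complex.conj_I, Complex.conj_ofReal]]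
    simp [neg_smul, smul_neg]
  have hB : Bmᴴ = Bm := by
    rw [hBdef, Matrix.conjTranspose_add, Matrix.conjTranspose_smul, hH1, hH0,
      show star (Complex.I * (ρ:ℂ)) = -(Complex.I * (ρ:ℂ)) by
        simp [Complex.star_def, Complex.conj_I, Complex.conj_ofReal]]
    simp [neg_smul, smul_neg]
  have key2 : φ' Real.pi + Bm * φ Real.pi + ((ψ' 0)ᴴ + (ψ 0)ᴴ * A) = 0 := by
    rw [← key, hψπ, hψ'π, hφ0, hφ'0, Matrix.conjTranspose_neg, hB]
    simp only [Matrix.conjTranspose_one, one_mul, mul_one, mul_neg, neg_mul,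
      sub_neg_eq_add, neg_neg]
    abel
  rw [Matrix.conjTranspose_add, Matrix.conjTranspose_mul, hA, eq_neg_iff_add_eq_zero]
  calc (ψ' 0)ᴴ + (ψ 0)ᴴ * A + (φ' Real.pi + Bm * φ Real.pi)
      = φ' Real.pi + Bm * φ Real.pi + ((ψ' 0)ᴴ + (ψ 0)ᴴ * A) := by abel
    _ = 0 := key2
end

section
/- Consider the quadratic matrix pencil L: Y″ + (ρ²I + 2iρQ_1(x) + Q_0(x))Y = 0 on (0,π) with boundary conditions Y′(0) + (iρh_1 + h_0)Y(0) = 0 and Y′(π) + (iρH_1 + H_0)Y(π) = 0, where Q_1, Q_0 : [0,π] → ℂ^{m×m} are integrable with Q_1(x)† = −Q_1(x), Q_0(x)† = Q_0(x) a.e., and h_1† = −h_1, H_1† = −H_1, h_0† = h_0, H_0† = H_0. Let ρ₀ ∈ ℂ be an eigenvalue with eigenvector Y (a not identically zero absolutely continuous solution satisfying both boundary conditions at ρ = ρ₀). If F[Y] := ∫₀^π Y′(x)†Y′(x) dx − ∫₀^π Y(x)†Q_0(x)Y(x) dx + Y(π)†H_0Y(π) − Y(0)†h_0Y(0) ≥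 0, then ρ₀ is real. -/
open Matrix MeasureTheory Set

attribute [local instance] Matrix.normedAddCommGroup Matrix.normedSpace

/-- The `ContinuousENorm` induced by the (sup) norm of the local instance above; current Lean no
longer finds it by instance search, since the Pi-norm topology is not reducibly the matrix one. -/
noncomputable def matrixContinuousENorm (m : ℕ) : ContinuousENorm (Matrix (Fin m) (Fin m) ℂ) :=
  SeminormedAddGroup.toContinuousENorm

attribute [local instance] matrixContinuousENorm

open scoped ComplexOrder

noncomputable instance matrixESeminormedAddMonoid (m : ℕ) :
    ESeminormedAddMonoid (Matrix (Fin m) (Fin m) ℂ) :=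
  { matrixContinuousENorm m, (Matrix.addMonoid : AddMonoid (Matrix (Fin m) (Fin m) ℂ)) with
    enorm_zero := by
      show ((‖(0 : Matrix (Fin m) (Fin m) ℂ)‖₊ : NNReal) : ENNReal) = 0
      simp
    enorm_add_le := fun x y => by
      show ((‖x + y‖₊ : NNReal) : ENNReal) ≤ (‖x‖₊ : ENNReal) + (‖y‖₊ : ENNReal)
      exact_mod_cast nnnorm_add_le x y }

namespace PencilAux
variable {m : ℕ}

lemma norm_starDot_le (a c : Fin m → ℂ) : ‖star a ⬝ᵥ c‖ ≤ (m : ℝ) * (‖a‖ * ‖c‖) := by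
  have h : star a ⬝ᵥ c = ∑ i, star (a i) * c i := rfl
  rw [h]
  calc ‖∑ i, star (a i) * c i‖ ≤ ∑ i : Fin m, ‖star (a i) * c i‖ := norm_sum_le _ _
    _ ≤ ∑ _i : Fin m, ‖a‖ * ‖c‖ := Finset.sum_le_sum (fun i _ => by
        rw [norm_mul, norm_star]
        exact mul_le_mul (norm_le_pi_norm a i) (norm_le_pi_norm c i) (norm_nonneg _)
          (norm_nonneg _))
    _ = (m : ℝ) * (‖a‖ * ‖c‖) := by
        simp [Finset.sum_const, Finset.card_univ, nsmul_eq_mul]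

lemma norm_mulVec_le (M : Matrix (Fin m) (Fin m) ℂ) (v : Fin m → ℂ) :
    ‖M.mulVec v‖ ≤ (m : ℝ) * (‖M‖ * ‖v‖) := by
  have hC : (0:ℝ) ≤ (m : ℝ) * (‖M‖ * ‖v‖) := by positivity
  rw [pi_norm_le_iff_of_nonneg hC]
  intro i
  have h : M.mulVec v i = ∑ j, M i j * v j := rfl
  rw [h]
  calc ‖∑ j, M i j * v j‖ ≤ ∑ j : Fin m, ‖M i j * v j‖ := norm_sum_le _ _
    _ ≤ ∑ _j : Fin m, ‖M‖ * ‖v‖ := Finset.sum_le_sum (fun j _ => by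
        rw [norm_mul]
        exact mul_le_mul (Matrix.norm_entry_le_entrywise_sup_norm M) (norm_le_pi_norm v j)
          (norm_nonneg _) (norm_nonneg _))
    _ = (m : ℝ) * (‖M‖ * ‖v‖) := by
        simp [Finset.sum_const, Finset.card_univ, nsmul_eq_mul]

/-- `v ↦ star v ⬝ᵥ c` as a real-linear continuous map. -/
noncomputable def starDotCLM (c : Fin m → ℂ) : (Fin m → ℂ) →L[ℝ] ℂ :=
  LinearMap.toContinuousLinearMap
    { toFun := fun v => star v ⬝ᵥ c
      map_add' := fun x y => by show star (x+y) ⬝ᵥ c = _; rw [star_add, add_dotProduct]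
      map_smul' := fun r x => by
        show star (r • x) ⬝ᵥ c = _
        rw [star_smul, star_trivial, smul_dotProduct, RingHom.id_apply] }

@[simp] lemma starDotCLM_apply (c v : Fin m → ℂ) : starDotCLM c v = star v ⬝ᵥ c := rfl

/-- `v ↦ star c ⬝ᵥ v` as a complex-linear continuous map. -/
noncomputable def dotCLM (c : Fin m → ℂ) : (Fin m → ℂ) →L[ℂ] ℂ :=
  LinearMap.toContinuousLinearMap
    { toFun := fun v => star c ⬝ᵥ v
      map_add' := fun x y => by show star c ⬝ᵥ (x+y) = _; rw [dotProduct_add]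
      map_smul' := fun r x => by show star c ⬝ᵥ (r • x) = _; rw [dotProduct_smul, RingHom.id_apply, smul_eq_mul] }

@[simp] lemma dotCLM_apply (c v : Fin m → ℂ) : dotCLM c v = star c ⬝ᵥ v := rfl

lemma integral_dot_const {F : ℝ → Fin m → ℂ} {c : Fin m → ℂ} {a e : ℝ}
    (hF : IntervalIntegrable F volume a e) :
    ∫ t in a..e, star (F t) ⬝ᵥ c = star (∫ t in a..e, F t) ⬝ᵥ c := by
  have := (starDotCLM c).intervalIntegral_comp_comm hF
  simpa using this

lemma integral_const_dot {F : ℝ → Fin m → ℂ} {c : Fin m → ℂ} {a e : ℝ}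
    (hF : IntervalIntegrable F volume a e) :
    ∫ t in a..e, star c ⬝ᵥ F t = star c ⬝ᵥ ∫ t in a..e, F t := by
  have := (dotCLM c).intervalIntegral_comp_comm hF
  simpa using this

lemma intervalIntegral_re {f : ℝ → ℂ} {a e : ℝ} (hf : IntervalIntegrable f volume a e) :
    (∫ t in a..e, f t).re = ∫ t in a..e, (f t).re := by
  have := Complex.reCLM.intervalIntegral_comp_comm hf
  simpa using this.symm

lemma intervalIntegral_im {f : ℝ → ℂ} {a e : ℝ} (hf : IntervalIntegrable f volume a e) :
    (∫ t in a..e, f t).im = ∫ t in a..e, (f t).im := by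
  have := Complex.imCLM.intervalIntegral_comp_comm hf
  simpa using this.symm

lemma star_quad (M : Matrix (Fin m) (Fin m) ℂ) (v : Fin m → ℂ) :
    (starRingEnd ℂ) (star v ⬝ᵥ M.mulVec v) = star v ⬝ᵥ Mᴴ.mulVec v := by
  have h1 : (starRingEnd ℂ) (star v ⬝ᵥ M.mulVec v) = star (star v ⬝ᵥ M.mulVec v) := rfl
  rw [h1, star_dotProduct, star_star, star_mulVec, ← dotProduct_mulVec]


lemma re_eq_zero_of_skew {M : Matrix (Fin m) (Fin m) ℂ} (hM : Mᴴ = -M) (v : Fin m → ℂ) :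
    (star v ⬝ᵥ M.mulVec v).re = 0 := by
  have h := star_quad M v
  rw [hM, Matrix.neg_mulVec, dotProduct_neg] at h
  have := congrArg Complex.re h
  simp only [Complex.conj_re, Complex.neg_re] at this
  linarith

lemma im_eq_zero_of_herm {M : Matrix (Fin m) (Fin m) ℂ} (hM : Mᴴ = M) (v : Fin m → ℂ) :
    (star v ⬝ᵥ M.mulVec v).im = 0 := by
  have h := star_quad M v
  rw [hM] at h
  have := congrArg Complex.im h
  simp only [Complex.conj_im] at this
  linarith

lemma dot_self_eq_sum_normSq (v : Fin m → ℂ) :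
    star v ⬝ᵥ v = ((∑ i, Complex.normSq (v i) : ℝ) : ℂ) := by
  have h : star v ⬝ᵥ v = ∑ i, star (v i) * v i := rfl
  rw [h]
  push_cast
  refine Finset.sum_congr rfl (fun i _ => ?_)
  rw [RCLike.star_def, ← Complex.normSq_eq_conj_mul_self]

variable {b : ℝ}

lemma aesm_Ioc {E : Type*} [NormedAddCommGroup E] {f : ℝ → E}
    (hf : ContinuousOn f (Icc 0 b)) :
    AEStronglyMeasurable f (volume.restrict (Ioc 0 b)) :=
  (hf.mono Ioc_subset_Icc_self).aestronglyMeasurable measurableSet_Ioc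

lemma continuousOn_dot {u v : ℝ → Fin m → ℂ} {s : Set ℝ}
    (hu : ContinuousOn u s) (hv : ContinuousOn v s) :
    ContinuousOn (fun t => star (u t) ⬝ᵥ v t) s := by
  have h : (fun t => star (u t) ⬝ᵥ v t) = fun t => ∑ i, star (u t i) * v t i := rfl
  rw [h]
  apply continuousOn_finset_sum
  intro i _
  exact (((continuous_apply i).comp_continuousOn hu).star).mul
    ((continuous_apply i).comp_continuousOn hv)

lemma integrableOn_mulVec_cont (hb : 0 ≤ b) {M : ℝ → Matrix (Fin m) (Fin m) ℂ}
    {v : ℝ → Fin m → ℂ}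
    (hM : IntegrableOn M (Ioc 0 b)) (hv : ContinuousOn v (Icc 0 b)) :
    IntegrableOn (fun t => (M t).mulVec (v t)) (Ioc 0 b) := by
  obtain ⟨C, hC⟩ := isCompact_Icc.exists_bound_of_continuousOn hv
  have hC0 : 0 ≤ C := le_trans (norm_nonneg _) (hC 0 ⟨le_refl _, hb⟩)
  have hmeas : AEStronglyMeasurable (fun t => (M t).mulVec (v t))
      (volume.restrict (Ioc 0 b)) :=
    (continuous_fst.matrix_mulVec continuous_snd).comp_aestronglyMeasurable
      (hM.aestronglyMeasurable.prodMk (aesm_Ioc hv))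
  refine Integrable.mono' ((hM.norm.const_mul ((m : ℝ) * C))) hmeas ?_
  filter_upwards [ae_restrict_mem measurableSet_Ioc] with t ht
  calc ‖(M t).mulVec (v t)‖ ≤ (m : ℝ) * (‖M t‖ * ‖v t‖) := norm_mulVec_le _ _
    _ ≤ (m : ℝ) * (‖M t‖ * C) := by
        gcongr
        exact hC t (Ioc_subset_Icc_self ht)
    _ = (m : ℝ) * C * ‖M t‖ := by ring

lemma integrableOn_dot_cont (hb : 0 ≤ b) {u v : ℝ → Fin m → ℂ}
    (hu : ContinuousOn u (Icc 0 b)) (hv : IntegrableOn v (Ioc 0 b)) :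
    IntegrableOn (fun t => star (u t) ⬝ᵥ v t) (Ioc 0 b) := by
  obtain ⟨C, hC⟩ := isCompact_Icc.exists_bound_of_continuousOn hu
  have hmeas : AEStronglyMeasurable (fun t => star (u t) ⬝ᵥ v t)
      (volume.restrict (Ioc 0 b)) := by
    have h : (fun t => star (u t) ⬝ᵥ v t) = fun t => ∑ i, star (u t i) * v t i := rfl
    rw [h]
    apply Finset.aestronglyMeasurable_fun_sum
    intro i _
    exact (continuous_star.comp_aestronglyMeasurable
        ((continuous_apply i).comp_aestronglyMeasurable (aesm_Ioc hu))).mul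
      ((continuous_apply i).comp_aestronglyMeasurable hv.aestronglyMeasurable)
  refine Integrable.mono' ((hv.norm.const_mul ((m : ℝ) * C))) hmeas ?_
  filter_upwards [ae_restrict_mem measurableSet_Ioc] with t ht
  calc ‖star (u t) ⬝ᵥ v t‖ ≤ (m : ℝ) * (‖u t‖ * ‖v t‖) := norm_starDot_le _ _
    _ ≤ (m : ℝ) * (C * ‖v t‖) := by
        gcongr
        exact hC t (Ioc_subset_Icc_self ht)
    _ = (m : ℝ) * C * ‖v t‖ := by ring


lemma triangle_swap_dot (hb : 0 ≤ b) {Zf wf : ℝ → Fin m → ℂ}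
    (hZ : IntegrableOn Zf (Ioc 0 b)) (hw : IntegrableOn wf (Ioc 0 b)) :
    ∫ t in (0:ℝ)..b, star (Zf t) ⬝ᵥ (∫ s in (0:ℝ)..t, wf s) =
    ∫ s in (0:ℝ)..b, star (∫ t in s..b, Zf t) ⬝ᵥ wf s := by
  have hmeasIoc : ∀ c : ℝ, MeasurableSet (Ioc (0:ℝ) c) := fun c => measurableSet_Ioc
  set μ : Measure ℝ := volume.restrict (Ioc 0 b) with hμ
  rw [intervalIntegral.integral_of_le hb, intervalIntegral.integral_of_le hb]
  have key : ∀ t ∈ Ioc (0:ℝ) b, star (Zf t) ⬝ᵥ (∫ s in (0:ℝ)..t, wf s)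
      = ∫ s, star (Zf t) ⬝ᵥ ((Ioc (0:ℝ) t).indicator wf s) ∂μ := by
    intro t ht
    have hind : Integrable ((Ioc (0:ℝ) t).indicator wf) μ :=
      (integrable_indicator_iff (hmeasIoc t)).2 hw.integrableOn
    have h2 := (dotCLM (Zf t)).integral_comp_comm hind
    simp only [dotCLM_apply] at h2
    rw [h2]
    congr 1
    rw [intervalIntegral.integral_of_le ht.1.le, hμ, ← integral_indicator (hmeasIoc t),
      ← integral_indicator (hmeasIoc b)]
    congr 1
    ext s
    by_cases hs : s ∈ Ioc (0:ℝ) t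
    · rw [Set.indicator_of_mem hs, Set.indicator_of_mem (Ioc_subset_Ioc_right ht.2 hs),
        Set.indicator_of_mem hs]
    · rw [Set.indicator_of_notMem hs]
      by_cases hs' : s ∈ Ioc (0:ℝ) b
      · rw [Set.indicator_of_mem hs', Set.indicator_of_notMem hs]
      · rw [Set.indicator_of_notMem hs']
  rw [setIntegral_congr_fun measurableSet_Ioc key]
  have hT : MeasurableSet {p : ℝ × ℝ | 0 < p.2 ∧ p.2 ≤ p.1} :=
    (measurableSet_lt measurable_const measurable_snd).inter
      (measurableSet_le measurable_snd measurable_fst)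
  have hbase : Integrable (fun p : ℝ × ℝ => star (Zf p.1) ⬝ᵥ wf p.2) (μ.prod μ) := by
    have hmeas : AEStronglyMeasurable (fun p : ℝ × ℝ => star (Zf p.1) ⬝ᵥ wf p.2)
        (μ.prod μ) := by
      have h : (fun p : ℝ × ℝ => star (Zf p.1) ⬝ᵥ wf p.2)
          = fun p : ℝ × ℝ => ∑ i, star (Zf p.1 i) * wf p.2 i := rfl
      rw [h]
      apply Finset.aestronglyMeasurable_fun_sum
      intro i _
      exact (continuous_star.comp_aestronglyMeasurable
          ((continuous_apply i).comp_aestronglyMeasurable hZ.aestronglyMeasurable).comp_fst).mul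
        ((continuous_apply i).comp_aestronglyMeasurable hw.aestronglyMeasurable).comp_snd
    have hg : Integrable (fun p : ℝ × ℝ => (m : ℝ) * (‖Zf p.1‖ * ‖wf p.2‖)) (μ.prod μ) :=
      (hZ.norm.mul_prod hw.norm).const_mul _
    refine hg.mono' hmeas ?_
    filter_upwards with p
    exact norm_starDot_le _ _
  have hprod : Integrable (Function.uncurry
      (fun t s : ℝ => star (Zf t) ⬝ᵥ ((Ioc (0:ℝ) t).indicator wf s))) (μ.prod μ) := by
    have heq : (Function.uncurry (fun t s : ℝ => star (Zf t) ⬝ᵥ ((Ioc (0:ℝ) t).indicator wf s)))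
        = {p : ℝ × ℝ | 0 < p.2 ∧ p.2 ≤ p.1}.indicator
            (fun p => star (Zf p.1) ⬝ᵥ wf p.2) := by
      ext p
      obtain ⟨t, s⟩ := p
      simp only [Function.uncurry_apply_pair]
      by_cases hp : 0 < s ∧ s ≤ t
      · rw [Set.indicator_of_mem (show (t,s) ∈ {p : ℝ × ℝ | 0 < p.2 ∧ p.2 ≤ p.1} from hp),
          Set.indicator_of_mem (show s ∈ Ioc 0 t from hp)]
      · rw [Set.indicator_of_notMem (show (t,s) ∉ {p : ℝ × ℝ | 0 < p.2 ∧ p.2 ≤ p.1} from hp),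
          Set.indicator_of_notMem (show s ∉ Ioc 0 t from hp), dotProduct_zero]
    rw [heq]
    exact hbase.indicator hT
  rw [show (∫ t, ∫ s, star (Zf t) ⬝ᵥ ((Ioc (0:ℝ) t).indicator wf s) ∂μ ∂μ)
      = ∫ s, ∫ t, star (Zf t) ⬝ᵥ ((Ioc (0:ℝ) t).indicator wf s) ∂μ ∂μ from
    MeasureTheory.integral_integral_swap hprod]
  apply setIntegral_congr_fun measurableSet_Ioc
  intro s hs
  dsimp only
  have h0s : (0:ℝ) < s := hs.1
  have hmem : ∀ t : ℝ, star (Zf t) ⬝ᵥ ((Ioc (0:ℝ) t).indicator wf s)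
      = (Ici s).indicator (fun t => star (Zf t) ⬝ᵥ wf s) t := by
    intro t
    by_cases hts : s ≤ t
    · rw [Set.indicator_of_mem (show s ∈ Ioc 0 t from ⟨h0s, hts⟩),
        Set.indicator_of_mem (show t ∈ Ici s from hts)]
    · rw [Set.indicator_of_notMem (show s ∉ Ioc 0 t from fun h => hts h.2),
        Set.indicator_of_notMem (show t ∉ Ici s from hts), dotProduct_zero]
  rw [show (∫ t, star (Zf t) ⬝ᵥ ((Ioc (0:ℝ) t).indicator wf s) ∂μ)
      = ∫ t, (Ici s).indicator (fun t => star (Zf t) ⬝ᵥ wf s) t ∂μ from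
    integral_congr_ae (Filter.Eventually.of_forall hmem)]
  rw [integral_indicator measurableSet_Ici, hμ,
    Measure.restrict_restrict measurableSet_Ici]
  have hset : Ici s ∩ Ioc 0 b = Icc s b := by
    ext t
    simp only [mem_inter_iff, mem_Ici, mem_Ioc, mem_Icc]
    exact ⟨fun ⟨h1, _, h3⟩ => ⟨h1, h3⟩, fun ⟨h1, h2⟩ => ⟨h1, h0s.trans_le h1, h2⟩⟩
  rw [hset, integral_Icc_eq_integral_Ioc, ← intervalIntegral.integral_of_le hs.2]
  exact integral_dot_const ((intervalIntegrable_iff_integrableOn_Ioc_of_le hs.2).2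
    (hZ.mono_set (Ioc_subset_Ioc_left hs.1.le)))


lemma ii_of_contOn (hb : 0 ≤ b) {E : Type*} [NormedAddCommGroup E] {f : ℝ → E}
    (hf : ContinuousOn f (Icc 0 b)) : IntervalIntegrable f volume 0 b := by
  apply ContinuousOn.intervalIntegrable
  rwa [uIcc_of_le hb]

lemma energy (hb : 0 ≤ b) {Y Z w : ℝ → Fin m → ℂ}
    (hYc : ContinuousOn Y (Icc 0 b)) (hZc : ContinuousOn Z (Icc 0 b))
    (hw : IntegrableOn w (Ioc 0 b))
    (hYeq : ∀ x ∈ Icc (0:ℝ) b, Y x = Y 0 + ∫ t in (0:ℝ)..x, Z t)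
    (hZeq : ∀ x ∈ Icc (0:ℝ) b, Z x = Z 0 - ∫ t in (0:ℝ)..x, w t) :
    star (Y b) ⬝ᵥ Z b - star (Y 0) ⬝ᵥ Z 0
      = (∫ t in (0:ℝ)..b, star (Z t) ⬝ᵥ Z t) - ∫ t in (0:ℝ)..b, star (Y t) ⬝ᵥ w t := by
  have hbmem : b ∈ Icc (0:ℝ) b := ⟨hb, le_refl b⟩
  have hZi : IntegrableOn Z (Ioc 0 b) :=
    (hZc.integrableOn_Icc).mono_set Ioc_subset_Icc_self
  have iiZ : IntervalIntegrable Z volume 0 b :=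
    (intervalIntegrable_iff_integrableOn_Ioc_of_le hb).2 hZi
  have iiw : IntervalIntegrable w volume 0 b :=
    (intervalIntegrable_iff_integrableOn_Ioc_of_le hb).2 hw
  set Sz := ∫ t in (0:ℝ)..b, Z t with hSz
  set Sw := ∫ t in (0:ℝ)..b, w t with hSw
  -- interval integrabilities
  have iiZZ : IntervalIntegrable (fun t => star (Z t) ⬝ᵥ Z t) volume 0 b :=
    ii_of_contOn hb (continuousOn_dot hZc hZc)
  have iiZZ0 : IntervalIntegrable (fun t => star (Z t) ⬝ᵥ Z 0) volume 0 b :=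
    ii_of_contOn hb (continuousOn_dot hZc continuousOn_const)
  have iiZW : IntervalIntegrable (fun t => star (Z t) ⬝ᵥ (∫ s in (0:ℝ)..t, w s)) volume 0 b := by
    rw [intervalIntegrable_iff_integrableOn_Ioc_of_le hb]
    apply MeasureTheory.IntegrableOn.congr_fun
      (show IntegrableOn (fun t => star (Z t) ⬝ᵥ Z 0 - star (Z t) ⬝ᵥ Z t) (Ioc 0 b) volume from
        (iiZZ0.1).sub (iiZZ.1)) ?_ measurableSet_Ioc
    intro t ht
    have h := hZeq t (Ioc_subset_Icc_self ht)
    have hW : (∫ s in (0:ℝ)..t, w s) = Z 0 - Z t := by rw [h]; abel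
    show _ = star (Z t) ⬝ᵥ (∫ s in (0:ℝ)..t, w s)
    rw [hW, dotProduct_sub]
  have iiYw : IntervalIntegrable (fun t => star (Y t) ⬝ᵥ w t) volume 0 b :=
    (intervalIntegrable_iff_integrableOn_Ioc_of_le hb).2 (integrableOn_dot_cont hb hYc hw)
  have iiSzw : IntervalIntegrable (fun t => star Sz ⬝ᵥ w t) volume 0 b := by
    rw [intervalIntegrable_iff_integrableOn_Ioc_of_le hb]
    have := (dotCLM Sz).integrable_comp hw
    exact this
  have iiY0w : IntervalIntegrable (fun t => star (Y 0) ⬝ᵥ w t) volume 0 b := by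
    rw [intervalIntegrable_iff_integrableOn_Ioc_of_le hb]
    have := (dotCLM (Y 0)).integrable_comp hw
    exact this
  -- step 1 : expand ∫ ⟪Z, Z⟫
  have step1 : (∫ t in (0:ℝ)..b, star (Z t) ⬝ᵥ Z t)
      = star Sz ⬝ᵥ Z 0 - ∫ t in (0:ℝ)..b, star (Z t) ⬝ᵥ (∫ s in (0:ℝ)..t, w s) := by
    have hcong : EqOn (fun t => star (Z t) ⬝ᵥ Z t)
        (fun t => star (Z t) ⬝ᵥ Z 0 - star (Z t) ⬝ᵥ (∫ s in (0:ℝ)..t, w s)) (uIcc 0 b) := by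
      intro t ht
      rw [uIcc_of_le hb] at ht
      have h1 := congrArg (fun v => star (Z t) ⬝ᵥ v) (hZeq t ht)
      show star (Z t) ⬝ᵥ Z t = star (Z t) ⬝ᵥ Z 0 - star (Z t) ⬝ᵥ (∫ s in (0:ℝ)..t, w s)
      rw [h1, dotProduct_sub]
    rw [intervalIntegral.integral_congr hcong, intervalIntegral.integral_sub iiZZ0 iiZW,
      integral_dot_const iiZ]
  -- step 2 : the swap
  have step2 : (∫ t in (0:ℝ)..b, star (Z t) ⬝ᵥ (∫ s in (0:ℝ)..t, w s))
      = star Sz ⬝ᵥ Sw - (∫ t in (0:ℝ)..b, star (Y t) ⬝ᵥ w t) + star (Y 0) ⬝ᵥ Sw := by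
    rw [triangle_swap_dot hb hZi hw]
    have hcong : EqOn (fun s => star (∫ t in s..b, Z t) ⬝ᵥ w s)
        (fun s => star Sz ⬝ᵥ w s - star (Y s) ⬝ᵥ w s + star (Y 0) ⬝ᵥ w s) (uIcc 0 b) := by
      intro s hs
      rw [uIcc_of_le hb] at hs
      have hsub : (∫ t in s..b, Z t) = Sz - ∫ t in (0:ℝ)..s, Z t := by
        rw [hSz, ← intervalIntegral.integral_interval_sub_left iiZ
          (iiZ.mono_set (uIcc_subset_uIcc (left_mem_uIcc) (by rw [uIcc_of_le hb]; exact hs)))]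
      have hYs : (∫ t in (0:ℝ)..s, Z t) = Y s - Y 0 := by rw [hYeq s hs]; abel
      simp only [hsub, hYs, star_sub, sub_dotProduct]
      ring
    rw [intervalIntegral.integral_congr hcong,
      intervalIntegral.integral_add (iiSzw.sub iiYw) iiY0w,
      intervalIntegral.integral_sub iiSzw iiYw,
      integral_const_dot iiw, integral_const_dot iiw]
  rw [step1, step2, hYeq b hbmem, hZeq b hbmem]
  simp only [star_add, add_dotProduct, dotProduct_sub]
  ring


lemma pos_integral {b : ℝ} (hb : 0 < b) {r : ℝ → ℝ} (hrc : ContinuousOn r (Icc 0 b))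
    (hr0 : ∀ t, 0 ≤ r t) {x₀ : ℝ} (hx₀ : x₀ ∈ Icc 0 b) (hpos : 0 < r x₀) :
    0 < ∫ t in (0:ℝ)..b, r t := by
  have hb' : (0:ℝ) ≤ b := hb.le
  have hcw : ContinuousWithinAt r (Icc 0 b) x₀ := hrc x₀ hx₀
  have hev : ∀ᶠ x in nhdsWithin x₀ (Icc 0 b), 0 < r x :=
    hcw.eventually (eventually_gt_nhds hpos)
  obtain ⟨δ, hδ, hball⟩ := Metric.mem_nhdsWithin_iff.1 hev
  set c := max 0 (x₀ - δ) with hc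
  set d := min b (x₀ + δ) with hd
  have hc0 : 0 ≤ c := le_max_left _ _
  have hcx : c ≤ x₀ := max_le hx₀.1 (by linarith)
  have hdx : x₀ ≤ d := le_min hx₀.2 (by linarith)
  have hdb : d ≤ b := min_le_left _ _
  have hcd : c < d := by
    apply max_lt
    · exact lt_min hb (by linarith [hx₀.1])
    · exact lt_of_lt_of_le (by linarith) hdx
  have hsub : ∀ x ∈ Ioo c d, 0 < r x := by
    intro x hx
    apply hball
    constructor
    · rw [Metric.mem_ball, Real.dist_eq, abs_lt]
      constructor
      · have := (le_max_right 0 (x₀ - δ)).trans_lt hx.1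
        linarith
      · have := hx.2.trans_le (min_le_right b (x₀ + δ))
        linarith
    · exact ⟨hc0.trans hx.1.le, hx.2.le.trans hdb⟩
  have iir : IntervalIntegrable r volume 0 b := ii_of_contOn hb' hrc
  have hcmem : c ∈ uIcc (0:ℝ) b := by rw [uIcc_of_le hb']; exact ⟨hc0, hcx.trans hx₀.2⟩
  have hdmem : d ∈ uIcc (0:ℝ) b := by
    rw [uIcc_of_le hb']; exact ⟨hc0.trans hcd.le, hdb⟩
  have i0c : IntervalIntegrable r volume 0 c :=
    iir.mono_set (uIcc_subset_uIcc left_mem_uIcc hcmem)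
  have icd : IntervalIntegrable r volume c d :=
    iir.mono_set (uIcc_subset_uIcc hcmem hdmem)
  have idb : IntervalIntegrable r volume d b :=
    iir.mono_set (uIcc_subset_uIcc hdmem right_mem_uIcc)
  have h1 : 0 < ∫ t in c..d, r t := intervalIntegral.intervalIntegral_pos_of_pos_on icd hsub hcd
  have h2 : 0 ≤ ∫ t in (0:ℝ)..c, r t :=
    intervalIntegral.integral_nonneg hc0 (fun u _ => hr0 u)
  have h3 : 0 ≤ ∫ t in d..b, r t :=
    intervalIntegral.integral_nonneg hdb (fun u _ => hr0 u)
  rw [← intervalIntegral.integral_add_adjacent_intervals i0c (icd.trans idb),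
    ← intervalIntegral.integral_add_adjacent_intervals icd idb]
  linarith

end PencilAux


/-- (Remark 1.) Under condition (II), if `ρ₀` is an eigenvalue of the
pencil with eigenvector `Y` (with derivative `Z`), and the quadratic form
`F[Y] = ∫₀^π Y'ᴴY' - ∫₀^π YᴴQ₀Y + Y(π)ᴴH₀Y(π) - Y(0)ᴴh₀Y(0)` is nonnegative, then `ρ₀`
is real. -/
theorem eigenvalue_real_of_form_nonneg (m : ℕ) (hm : 1 ≤ m) (ρ₀ : ℂ)
    (Q1 Q0 : ℝ → Matrix (Fin m) (Fin m) ℂ)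
    (h1 h0 H1 H0 : Matrix (Fin m) (Fin m) ℂ)
    (hQ1 : IntegrableOn Q1 (Icc 0 Real.pi))
    (hQ0 : IntegrableOn Q0 (Icc 0 Real.pi))
    (hQ1skew : ∀ᵐ x ∂(volume.restrict (Icc 0 Real.pi)), (Q1 x)ᴴ = -Q1 x)
    (hQ0herm : ∀ᵐ x ∂(volume.restrict (Icc 0 Real.pi)), (Q0 x)ᴴ = Q0 x)
    (hh1 : h1ᴴ = -h1) (hH1 : H1ᴴ = -H1) (hh0 : h0ᴴ = h0) (hH0 : H0ᴴ = H0)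
    (Y Z : ℝ → Fin m → ℂ)
    (hsol : IsVecSol m Q1 Q0 ρ₀ Y Z)
    (hbc0 : Z 0 + ((Complex.I * ρ₀) • h1 + h0).mulVec (Y 0) = 0)
    (hbcπ : Z Real.pi + ((Complex.I * ρ₀) • H1 + H0).mulVec (Y Real.pi) = 0)
    (hY0 : ¬ (∀ x ∈ Icc 0 Real.pi, Y x = 0))
    (hF : 0 ≤ (∫ x in (0:ℝ)..Real.pi, star (Z x) ⬝ᵥ Z x) -
        (∫ x in (0:ℝ)..Real.pi, star (Y x) ⬝ᵥ (Q0 x).mulVec (Y x)) +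
        star (Y Real.pi) ⬝ᵥ H0.mulVec (Y Real.pi) -
        star (Y 0) ⬝ᵥ h0.mulVec (Y 0)) :
    ρ₀.im = 0 := by
  classical
  obtain ⟨hYc, hZc, hYeq, hZeq⟩ := hsol
  have hb : (0:ℝ) ≤ Real.pi := Real.pi_pos.le
  -- integrability facts
  have hQ1' : IntegrableOn Q1 (Ioc 0 Real.pi) := hQ1.mono_set Ioc_subset_Icc_self
  have hQ0' : IntegrableOn Q0 (Ioc 0 Real.pi) := hQ0.mono_set Ioc_subset_Icc_self
  have hPint : IntegrableOn (pencilPot m Q1 Q0 ρ₀) (Ioc 0 Real.pi) := by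
    have h1' : IntegrableOn (fun _ : ℝ => ρ₀ ^ 2 • (1 : Matrix (Fin m) (Fin m) ℂ))
        (Ioc 0 Real.pi) := continuous_const.integrableOn_Ioc
    have h2' : IntegrableOn ((2 * Complex.I * ρ₀) • Q1) (Ioc 0 Real.pi) :=
      hQ1'.smul ((2:ℂ) * Complex.I * ρ₀)
    have h3 := (h1'.add h2').add hQ0'
    have hfun : pencilPot m Q1 Q0 ρ₀
        = ((fun _ : ℝ => ρ₀ ^ 2 • (1 : Matrix (Fin m) (Fin m) ℂ))
            + (2 * Complex.I * ρ₀) • Q1) + Q0 := by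
      funext x
      simp only [Pi.add_apply, Pi.smul_apply, pencilPot]
    rw [hfun]
    exact h3
  have hw : IntegrableOn (fun t => (pencilPot m Q1 Q0 ρ₀ t).mulVec (Y t)) (Ioc 0 Real.pi) :=
    PencilAux.integrableOn_mulVec_cont hb hPint hYc
  have hQ1Y : IntegrableOn (fun t => (Q1 t).mulVec (Y t)) (Ioc 0 Real.pi) :=
    PencilAux.integrableOn_mulVec_cont hb hQ1' hYc
  have hQ0Y : IntegrableOn (fun t => (Q0 t).mulVec (Y t)) (Ioc 0 Real.pi) :=
    PencilAux.integrableOn_mulVec_cont hb hQ0' hYc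
  have iiYY : IntervalIntegrable (fun t => star (Y t) ⬝ᵥ Y t) volume 0 Real.pi :=
    PencilAux.ii_of_contOn hb (PencilAux.continuousOn_dot hYc hYc)
  have iiYQ1Y : IntervalIntegrable (fun t => star (Y t) ⬝ᵥ (Q1 t).mulVec (Y t))
      volume 0 Real.pi :=
    (intervalIntegrable_iff_integrableOn_Ioc_of_le hb).2
      (PencilAux.integrableOn_dot_cont hb hYc hQ1Y)
  have iiYQ0Y : IntervalIntegrable (fun t => star (Y t) ⬝ᵥ (Q0 t).mulVec (Y t))
      volume 0 Real.pi :=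
    (intervalIntegrable_iff_integrableOn_Ioc_of_le hb).2
      (PencilAux.integrableOn_dot_cont hb hYc hQ0Y)
  -- energy identity
  have hen := PencilAux.energy hb hYc hZc hw hYeq hZeq
  -- expansion of the potential term
  have hexp : (∫ t in (0:ℝ)..Real.pi, star (Y t) ⬝ᵥ (pencilPot m Q1 Q0 ρ₀ t).mulVec (Y t))
      = ρ₀^2 * (∫ t in (0:ℝ)..Real.pi, star (Y t) ⬝ᵥ Y t)
        + (2 * Complex.I * ρ₀) * (∫ t in (0:ℝ)..Real.pi, star (Y t) ⬝ᵥ (Q1 t).mulVec (Y t))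
        + ∫ t in (0:ℝ)..Real.pi, star (Y t) ⬝ᵥ (Q0 t).mulVec (Y t) := by
    have hpt : ∀ t : ℝ, star (Y t) ⬝ᵥ (pencilPot m Q1 Q0 ρ₀ t).mulVec (Y t)
        = ρ₀^2 * (star (Y t) ⬝ᵥ Y t)
          + (2 * Complex.I * ρ₀) * (star (Y t) ⬝ᵥ (Q1 t).mulVec (Y t))
          + star (Y t) ⬝ᵥ (Q0 t).mulVec (Y t) := by
      intro t
      rw [pencilPot, Matrix.add_mulVec, Matrix.add_mulVec, Matrix.smul_mulVec,
        Matrix.smul_mulVec, Matrix.one_mulVec, dotProduct_add, dotProduct_add,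
        dotProduct_smul, dotProduct_smul, smul_eq_mul, smul_eq_mul]
    rw [intervalIntegral.integral_congr (fun t _ => hpt t),
      intervalIntegral.integral_add ((iiYY.const_mul _).add (iiYQ1Y.const_mul _)) iiYQ0Y,
      intervalIntegral.integral_add (iiYY.const_mul _) (iiYQ1Y.const_mul _),
      intervalIntegral.integral_const_mul, intervalIntegral.integral_const_mul]
  -- boundary conditions
  have hbcπ' : star (Y Real.pi) ⬝ᵥ Z Real.pi
      = -(Complex.I * ρ₀ * (star (Y Real.pi) ⬝ᵥ H1.mulVec (Y Real.pi)))
        - star (Y Real.pi) ⬝ᵥ H0.mulVec (Y Real.pi) := by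
    have hZπ : Z Real.pi = -(((Complex.I * ρ₀) • H1 + H0).mulVec (Y Real.pi)) :=
      eq_neg_of_add_eq_zero_left hbcπ
    rw [hZπ, dotProduct_neg, Matrix.add_mulVec, dotProduct_add, Matrix.smul_mulVec,
      dotProduct_smul, smul_eq_mul]
    ring
  have hbc0' : star (Y 0) ⬝ᵥ Z 0
      = -(Complex.I * ρ₀ * (star (Y 0) ⬝ᵥ h1.mulVec (Y 0)))
        - star (Y 0) ⬝ᵥ h0.mulVec (Y 0) := by
    have hZ0 : Z 0 = -(((Complex.I * ρ₀) • h1 + h0).mulVec (Y 0)) :=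
      eq_neg_of_add_eq_zero_left hbc0
    rw [hZ0, dotProduct_neg, Matrix.add_mulVec, dotProduct_add, Matrix.smul_mulVec,
      dotProduct_smul, smul_eq_mul]
    ring
  -- positivity of ∫⟪Y,Y⟫ before abstracting
  push_neg at hY0
  obtain ⟨x₀, hx₀, hYx₀⟩ := hY0
  have hqYpos : 0 < (∫ t in (0:ℝ)..Real.pi, star (Y t) ⬝ᵥ Y t).re := by
    rw [PencilAux.intervalIntegral_re iiYY]
    apply PencilAux.pos_integral Real.pi_pos
    · exact Complex.continuous_re.comp_continuousOn (PencilAux.continuousOn_dot hYc hYc)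
    · intro t
      rw [PencilAux.dot_self_eq_sum_normSq, Complex.ofReal_re]
      exact Finset.sum_nonneg fun i _ => Complex.normSq_nonneg _
    · exact hx₀
    · obtain ⟨i, hi⟩ := Function.ne_iff.1 hYx₀
      rw [PencilAux.dot_self_eq_sum_normSq, Complex.ofReal_re]
      exact Finset.sum_pos' (fun j _ => Complex.normSq_nonneg _)
        ⟨i, Finset.mem_univ i, Complex.normSq_pos.2 hi⟩
  -- realness facts
  have hqYim : (∫ t in (0:ℝ)..Real.pi, star (Y t) ⬝ᵥ Y t).im = 0 := by
    rw [PencilAux.intervalIntegral_im iiYY]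
    have hz : ∀ t : ℝ, (star (Y t) ⬝ᵥ Y t).im = 0 := fun t => by
      rw [PencilAux.dot_self_eq_sum_normSq]; exact Complex.ofReal_im _
    simp [hz]
  have hq1re : (∫ t in (0:ℝ)..Real.pi, star (Y t) ⬝ᵥ (Q1 t).mulVec (Y t)).re = 0 := by
    rw [PencilAux.intervalIntegral_re iiYQ1Y, intervalIntegral.integral_of_le hb]
    have hae : ∀ᵐ x ∂(volume.restrict (Ioc 0 Real.pi)), (Q1 x)ᴴ = -Q1 x :=
      ae_restrict_of_ae_restrict_of_subset Ioc_subset_Icc_self hQ1skew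
    have : ∫ x in Ioc (0:ℝ) Real.pi, (star (Y x) ⬝ᵥ (Q1 x).mulVec (Y x)).re
        = ∫ _x in Ioc (0:ℝ) Real.pi, (0:ℝ) := by
      apply integral_congr_ae
      filter_upwards [hae] with x hx
      exact PencilAux.re_eq_zero_of_skew hx (Y x)
    rw [this, integral_zero]
  -- set up abbreviations
  set qZ := ∫ t in (0:ℝ)..Real.pi, star (Z t) ⬝ᵥ Z t with hqZdef
  set qY := ∫ t in (0:ℝ)..Real.pi, star (Y t) ⬝ᵥ Y t with hqYdef
  set q1 := ∫ t in (0:ℝ)..Real.pi, star (Y t) ⬝ᵥ (Q1 t).mulVec (Y t) with hq1def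
  set q0 := ∫ t in (0:ℝ)..Real.pi, star (Y t) ⬝ᵥ (Q0 t).mulVec (Y t) with hq0def
  set B1b := star (Y Real.pi) ⬝ᵥ H1.mulVec (Y Real.pi) with hB1bdef
  set B0b := star (Y Real.pi) ⬝ᵥ H0.mulVec (Y Real.pi) with hB0bdef
  set B10 := star (Y 0) ⬝ᵥ h1.mulVec (Y 0) with hB10def
  set B00 := star (Y 0) ⬝ᵥ h0.mulVec (Y 0) with hB00def
  have hB1bre : B1b.re = 0 := PencilAux.re_eq_zero_of_skew hH1 (Y Real.pi)
  have hB10re : B10.re = 0 := PencilAux.re_eq_zero_of_skew hh1 (Y 0)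
  have hB0bim : B0b.im = 0 := PencilAux.im_eq_zero_of_herm hH0 (Y Real.pi)
  have hB00im : B00.im = 0 := PencilAux.im_eq_zero_of_herm hh0 (Y 0)
  -- the main algebraic identity
  have main : ρ₀^2 * qY + Complex.I * ρ₀ * (2*q1 - B1b + B10) = qZ - q0 + B0b - B00 := by
    rw [hbcπ', hbc0', hexp] at hen
    linear_combination hen
  -- nonnegativity of the form
  rw [Complex.le_def] at hF
  have hFre : 0 ≤ (qZ - q0 + B0b - B00).re := by
    have := hF.1; simpa using this
  have hFim : (qZ - q0 + B0b - B00).im = 0 := by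
    have := hF.2; simpa using this.symm
  -- extract real equations
  have hKre : (2*q1 - B1b + B10).re = 0 := by
    simp [Complex.add_re, Complex.sub_re, Complex.mul_re, hq1re, hB1bre, hB10re]
  have hqYc : qY = ((qY.re : ℝ) : ℂ) := by
    apply Complex.ext
    · simp
    · simp [hqYim]
  have hKc : (2*q1 - B1b + B10) = (((2*q1 - B1b + B10).im : ℝ) : ℂ) * Complex.I := by
    apply Complex.ext
    · simp [hKre]
    · simp
  have hRc : qZ - q0 + B0b - B00 = (((qZ - q0 + B0b - B00).re : ℝ) : ℂ) := by
    apply Complex.ext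
    · simp
    · simp [hFim]
  rw [hqYc, hKc, hRc] at main
  set a := qY.re with hadef
  set k := (2*q1 - B1b + B10).im with hkdef
  set f := (qZ - q0 + B0b - B00).re with hfdef
  have him := congrArg Complex.im main
  have hre := congrArg Complex.re main
  simp only [Complex.add_im, Complex.add_re, Complex.sub_im, Complex.sub_re, Complex.mul_im,
    Complex.mul_re, Complex.I_re, Complex.I_im, Complex.ofReal_re, Complex.ofReal_im,
    pow_two] at him hre
  by_contra hβ
  have hfac : ρ₀.im * (2 * ρ₀.re * a - k) = 0 := by linear_combination him
  rcases mul_eq_zero.1 hfac with h | h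
  · exact hβ h
  · have hk : k = 2 * ρ₀.re * a := by linarith
    have hre' : (ρ₀.re * ρ₀.re - ρ₀.im * ρ₀.im) * a - ρ₀.re * k = f := by
      linear_combination hre
    rw [hk] at hre'
    nlinarith [mul_pos (mul_self_pos.2 hβ) hqYpos,
      mul_nonneg (mul_self_nonneg ρ₀.re) hqYpos.le, hFre, hre']
end

section
/- Consider the quadratic matrix pencil L: Y″ + (ρ²I + 2iρQ_1(x) + Q_0(x))Y = 0 on (0,π) with boundary conditions Y′(0) + (iρh_1 + h_0)Y(0) = 0 and Y′(π) + (iρH_1 + H_0)Y(π) = 0, where Q_1, Q_0 : [0,π] → ℂ^{m×m} are integrable with Q_1(x)† = −Q_1(x), Q_0(x)† = Q_0(x) a.e., and h_1† = −h_1, H_1† = −H_1, h_0† = h_0, H_0† = H_0. Suppose additionally that Q_0(x) is negative semidefinite for a.e. x ∈ [0,π], h_0 is negative semidefinite, and H_0 is positive semidefinite. Then every eigenvalue of L is real. -/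
open Matrix MeasureTheory Set

attribute [local instance] Matrix.normedAddCommGroup Matrix.normedSpace

open scoped ComplexConjugate

open scoped ComplexConjugate

lemma triangle_swap {x : ℝ} {f g : ℝ → ℂ}
    (hf : IntegrableOn f (Ioc 0 x)) (hg : IntegrableOn g (Ioc 0 x)) :
    (∫ s in Ioc 0 x, f s) * (∫ t in Ioc 0 x, g t)
      = (∫ s in Ioc 0 x, f s * ∫ t in Ioc 0 s, g t)
        + ∫ t in Ioc 0 x, (∫ s in Ioc 0 t, f s) * g t := by
  set μ := volume.restrict (Ioc (0:ℝ) x) with hμ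
  have hD : MeasurableSet {p : ℝ × ℝ | p.2 ≤ p.1} := measurableSet_le measurable_snd measurable_fst
  have hprod : Integrable (fun p : ℝ × ℝ => f p.1 * g p.2) (μ.prod μ) := hf.mul_prod hg
  have hG : Integrable ({p : ℝ × ℝ | p.2 ≤ p.1}.indicator fun p => f p.1 * g p.2) (μ.prod μ) :=
    hprod.indicator hD
  have hF : Integrable ({p : ℝ × ℝ | p.2 ≤ p.1}ᶜ.indicator fun p => f p.1 * g p.2) (μ.prod μ) :=
    hprod.indicator hD.compl
  have hsplit : (∫ s in Ioc 0 x, f s) * (∫ t in Ioc 0 x, g t)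
      = (∫ p, ({p : ℝ × ℝ | p.2 ≤ p.1}.indicator fun p => f p.1 * g p.2) p ∂(μ.prod μ))
        + ∫ p, ({p : ℝ × ℝ | p.2 ≤ p.1}ᶜ.indicator fun p => f p.1 * g p.2) p ∂(μ.prod μ) := by
    rw [← integral_add hG hF]
    rw [← integral_prod_mul f g]
    congr 1
    ext p
    by_cases h : p ∈ {p : ℝ × ℝ | p.2 ≤ p.1} <;>
      simp [Set.indicator_of_mem, Set.indicator_of_notMem, h]
  have hGval : (∫ p, ({p : ℝ × ℝ | p.2 ≤ p.1}.indicator fun p => f p.1 * g p.2) p ∂(μ.prod μ))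
      = ∫ s in Ioc 0 x, f s * ∫ t in Ioc 0 s, g t := by
    rw [integral_prod _ hG]
    apply setIntegral_congr_fun measurableSet_Ioc
    intro s hs
    have h1 : (fun t => ({p : ℝ × ℝ | p.2 ≤ p.1}.indicator fun p => f p.1 * g p.2) (s, t))
        = (Iic s).indicator (fun t => f s * g t) := by
      ext t; by_cases h : t ≤ s <;> simp [h]
    beta_reduce
    rw [h1, integral_indicator measurableSet_Iic, Measure.restrict_restrict measurableSet_Iic]
    have h2 : Iic s ∩ Ioc 0 x = Ioc 0 s := by
      ext t
      simp only [mem_inter_iff, mem_Iic, mem_Ioc]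
      exact ⟨fun ⟨a, b, c⟩ => ⟨b, a⟩, fun ⟨a, b⟩ => ⟨b, a, b.trans hs.2⟩⟩
    rw [h2, MeasureTheory.integral_const_mul]
  have hFval : (∫ p, ({p : ℝ × ℝ | p.2 ≤ p.1}ᶜ.indicator fun p => f p.1 * g p.2) p ∂(μ.prod μ))
      = ∫ t in Ioc 0 x, (∫ s in Ioc 0 t, f s) * g t := by
    rw [integral_prod_symm _ hF]
    apply setIntegral_congr_fun measurableSet_Ioc
    intro t ht
    have h1 : (fun s => ({p : ℝ × ℝ | p.2 ≤ p.1}ᶜ.indicator fun p => f p.1 * g p.2) (s, t))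
        = (Iio t).indicator (fun s => f s * g t) := by
      ext s; by_cases h : s < t
      · simp [h, not_le.2 h]
      · simp [h, not_lt.1 h]
    beta_reduce
    rw [h1, integral_indicator measurableSet_Iio, Measure.restrict_restrict measurableSet_Iio]
    have h2 : Iio t ∩ Ioc 0 x = Ioo 0 t := by
      ext s
      simp only [mem_inter_iff, mem_Iio, mem_Ioo, mem_Ioc]
      exact ⟨fun ⟨a, b, c⟩ => ⟨b, a⟩, fun ⟨a, b⟩ => ⟨b, a, b.le.trans ht.2⟩⟩
    rw [h2, MeasureTheory.integral_mul_const, ← integral_Ioc_eq_integral_Ioo]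
  rw [hsplit, hGval, hFval]

lemma parts_pi {f g : ℝ → ℂ} (c d : ℂ)
    (hf : IntegrableOn f (Icc 0 Real.pi)) (hg : IntegrableOn g (Icc 0 Real.pi)) :
    (c + ∫ t in (0:ℝ)..Real.pi, f t) * (d + ∫ t in (0:ℝ)..Real.pi, g t) - c * d
      = ∫ t in (0:ℝ)..Real.pi, (f t * (d + ∫ s in (0:ℝ)..t, g s)
          + (c + ∫ s in (0:ℝ)..t, f s) * g t) := by
  have hπ : (0:ℝ) ≤ Real.pi := Real.pi_pos.le
  have hfI : IntegrableOn f (Ioc 0 Real.pi) := hf.mono_set Ioc_subset_Icc_self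
  have hgI : IntegrableOn g (Ioc 0 Real.pi) := hg.mono_set Ioc_subset_Icc_self
  have hfV : IntegrableOn (fun t => f t * ∫ s in Ioc 0 t, g s) (Ioc 0 Real.pi) :=
    (hf.mul_continuousOn (intervalIntegral.continuousOn_primitive hg) isCompact_Icc).mono_set
      Ioc_subset_Icc_self
  have hUg : IntegrableOn (fun t => (∫ s in Ioc 0 t, f s) * g t) (Ioc 0 Real.pi) :=
    (hg.continuousOn_mul (intervalIntegral.continuousOn_primitive hf) isCompact_Icc).mono_set
      Ioc_subset_Icc_self
  rw [intervalIntegral.integral_of_le hπ, intervalIntegral.integral_of_le hπ,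
    intervalIntegral.integral_of_le hπ]
  have hcongr : EqOn
      (fun t => f t * (d + ∫ s in (0:ℝ)..t, g s) + (c + ∫ s in (0:ℝ)..t, f s) * g t)
      (fun t => (d * f t + f t * ∫ s in Ioc 0 t, g s)
        + (c * g t + (∫ s in Ioc 0 t, f s) * g t)) (Ioc 0 Real.pi) := by
    intro t ht
    simp only [intervalIntegral.integral_of_le ht.1.le]
    ring
  have h1 : IntegrableOn (fun t => d * f t + f t * ∫ s in Ioc 0 t, g s) (Ioc 0 Real.pi) :=
    (hfI.const_mul d).add hfV
  have h2 : IntegrableOn (fun t => c * g t + (∫ s in Ioc 0 t, f s) * g t) (Ioc 0 Real.pi) :=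
    (hgI.const_mul c).add hUg
  rw [setIntegral_congr_fun measurableSet_Ioc hcongr,
    integral_add h1 h2,
    integral_add (hfI.const_mul d) hfV, integral_add (hgI.const_mul c) hUg,
    MeasureTheory.integral_const_mul, MeasureTheory.integral_const_mul]
  linear_combination triangle_swap hfI hgI
open scoped ComplexConjugate

lemma entry_integrable {m : ℕ} {s : Set ℝ} {Q : ℝ → Matrix (Fin m) (Fin m) ℂ}
    (hQ : @IntegrableOn ℝ _ _ _ SeminormedAddGroup.toContinuousENorm Q s volume) (i j : Fin m) : IntegrableOn (fun t => Q t i j) s := by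
  refine Integrable.mono' hQ.norm ?_ ?_
  · exact ((continuous_apply j).comp (continuous_apply i)).comp_aestronglyMeasurable
      hQ.aestronglyMeasurable
  · filter_upwards with t using norm_entry_le_entrywise_sup_norm _

lemma integrable_of_components {m : ℕ} {V : ℝ → Fin m → ℂ} {s : Set ℝ}
    (h : ∀ j, IntegrableOn (fun t => V t j) s) : IntegrableOn V s := by
  have hV : V = fun t => ∑ j, V t j • (Pi.single j 1 : Fin m → ℂ) := by
    funext t i
    simp [Pi.single_apply, Finset.sum_ite_eq']
  rw [hV]
  exact integrable_finset_sum _ fun j _ => (h j).smul_const _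

lemma conj_quad {m : ℕ} (M : Matrix (Fin m) (Fin m) ℂ) (v : Fin m → ℂ) :
    conj (dotProduct (star v) (M.mulVec v)) = dotProduct (star v) (Mᴴ.mulVec v) := by
  simp only [dotProduct, Matrix.mulVec, Pi.star_apply, Matrix.conjTranspose_apply,
    map_sum, _root_.map_mul, Finset.mul_sum]
  rw [Finset.sum_comm]
  refine Finset.sum_congr rfl fun j _ => Finset.sum_congr rfl fun k _ => ?_
  simp [mul_comm, mul_left_comm, RingHomCompTriple.comp_apply, Complex.conj_conj]

lemma quad_real {A B C : ℝ} (hA : 0 < A) (hB : 0 ≤ B) {ρ : ℂ}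
    (h : ρ ^ 2 * (A : ℂ) + ρ * (C : ℂ) - (B : ℂ) = 0) : ρ.im = 0 := by
  have him := congrArg Complex.im h
  have hre := congrArg Complex.re h
  simp only [Complex.add_im, Complex.sub_im, Complex.mul_im, Complex.ofReal_im,
    Complex.ofReal_re, Complex.add_re, Complex.sub_re, Complex.mul_re, Complex.zero_im,
    Complex.zero_re, pow_two] at him hre
  by_contra hne
  have h2 : 0 < ρ.im ^ 2 := by positivity
  nlinarith [sq_nonneg ρ.re, sq_nonneg ρ.im, sq_nonneg (ρ.re * ρ.im), sq_nonneg (ρ.re + ρ.im),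
    mul_pos hA h2]


open scoped ComplexOrder

/-- Under condition (II), if moreover `Q₀(x) ≤ 0` a.e., `h₀ ≤ 0` and
`H₀ ≥ 0` (in the semidefinite order), then every eigenvalue of the pencil `L` is real. -/
theorem all_eigenvalues_real (m : ℕ) (hm : 1 ≤ m)
    (Q1 Q0 : ℝ → Matrix (Fin m) (Fin m) ℂ)
    (h1 h0 H1 H0 : Matrix (Fin m) (Fin m) ℂ)
    (hQ1 : @IntegrableOn ℝ _ _ _ SeminormedAddGroup.toContinuousENorm Q1 (Icc 0 Real.pi) volume)
    (hQ0 : @IntegrableOn ℝ _ _ _ SeminormedAddGroup.toContinuousENorm Q0 (Icc 0 Real.pi) volume)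
    (hQ1skew : ∀ᵐ x ∂(volume.restrict (Icc 0 Real.pi)), (Q1 x)ᴴ = -Q1 x)
    (hQ0herm : ∀ᵐ x ∂(volume.restrict (Icc 0 Real.pi)), (Q0 x)ᴴ = Q0 x)
    (hh1 : h1ᴴ = -h1) (hH1 : H1ᴴ = -H1) (hh0 : h0ᴴ = h0) (hH0 : H0ᴴ = H0)
    -- `Q₀ ≤ 0` a.e., `h₀ ≤ 0`, `H₀ ≥ 0`
    (hQ0neg : ∀ᵐ x ∂(volume.restrict (Icc 0 Real.pi)), (-(Q0 x)).PosSemidef)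
    (hh0neg : (-h0).PosSemidef) (hH0pos : H0.PosSemidef) :
    ∀ ρ : ℂ, IsEigenvalue m Q1 Q0 h1 h0 H1 H0 ρ → ρ.im = 0 := by
  intro ρ hev
  obtain ⟨Y, Z, ⟨hYc, hZc, hYeq, hZeq⟩, hbc0, hbcπ, hYne⟩ := hev
  have hπ0 : (0:ℝ) ≤ Real.pi := Real.pi_pos.le
  have h0mem : (0:ℝ) ∈ Icc (0:ℝ) Real.pi := ⟨le_refl _, hπ0⟩
  have hπmem : Real.pi ∈ Icc (0:ℝ) Real.pi := ⟨hπ0, le_refl _⟩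
  set P : ℝ → Matrix (Fin m) (Fin m) ℂ := pencilPot m Q1 Q0 ρ with hPdef
  -- integrability of the matrix potential and friends
  have hPint : @IntegrableOn ℝ _ _ _ SeminormedAddGroup.toContinuousENorm P (Icc 0 Real.pi) volume := by
    have hc : @IntegrableOn ℝ _ _ _ SeminormedAddGroup.toContinuousENorm (fun _ : ℝ => ρ ^ 2 • (1 : Matrix (Fin m) (Fin m) ℂ))
        (Icc 0 Real.pi) volume := integrableOn_const measure_Icc_lt_top.ne
    have h2 : @IntegrableOn ℝ _ _ _ SeminormedAddGroup.toContinuousENorm (fun x => (2 * Complex.I * ρ) • Q1 x) (Icc 0 Real.pi) volume :=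
      hQ1.smul (2 * Complex.I * ρ)
    exact (hc.add h2).add hQ0
  have hPij : ∀ i j, IntegrableOn (fun t => P t i j) (Icc 0 Real.pi) :=
    fun i j => entry_integrable hPint i j
  have hYcj : ∀ j, ContinuousOn (fun t => Y t j) (Icc 0 Real.pi) :=
    fun j => (continuous_apply j).comp_continuousOn hYc
  have hZcj : ∀ j, ContinuousOn (fun t => Z t j) (Icc 0 Real.pi) :=
    fun j => (continuous_apply j).comp_continuousOn hZc
  have hYconj : ∀ j, ContinuousOn (fun t => conj (Y t j)) (Icc 0 Real.pi) :=
    fun j => continuous_star.comp_continuousOn (hYcj j)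
  have hPYj : ∀ j, IntegrableOn (fun t => (P t).mulVec (Y t) j) (Icc 0 Real.pi) := by
    intro j
    have he : (fun t => (P t).mulVec (Y t) j) = fun t => ∑ k, P t j k * Y t k := by
      funext t; simp [Matrix.mulVec, dotProduct]
    rw [he]
    exact integrable_finset_sum _ fun k _ => (hPij j k).mul_continuousOn (hYcj k) isCompact_Icc
  have hPYv : IntegrableOn (fun t => (P t).mulVec (Y t)) (Icc 0 Real.pi) :=
    integrable_of_components hPYj
  have hZii : ∀ x ∈ Icc (0:ℝ) Real.pi, IntervalIntegrable Z volume 0 x := fun x hx =>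
    (hZc.mono (Icc_subset_Icc le_rfl hx.2)).intervalIntegrable_of_Icc hx.1
  have hPYii : ∀ x ∈ Icc (0:ℝ) Real.pi,
      IntervalIntegrable (fun t => (P t).mulVec (Y t)) volume 0 x := by
    intro x hx
    rw [intervalIntegrable_iff_integrableOn_Ioc_of_le hx.1]
    exact (hPYv.mono_set (Icc_subset_Icc le_rfl hx.2)).mono_set Ioc_subset_Icc_self
  -- componentwise integral representations
  have hYj : ∀ x ∈ Icc (0:ℝ) Real.pi, ∀ j, Y x j = Y 0 j + ∫ t in (0:ℝ)..x, Z t j := by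
    intro x hx j
    have h := congrFun (hYeq x hx) j
    rw [Pi.add_apply] at h
    rw [h]
    congr 1
    exact (ContinuousLinearMap.intervalIntegral_comp_comm
      (ContinuousLinearMap.proj (R := ℂ) (φ := fun _ : Fin m => ℂ) j) (hZii x hx)).symm
  have hZj : ∀ x ∈ Icc (0:ℝ) Real.pi, ∀ j,
      Z x j = Z 0 j + ∫ t in (0:ℝ)..x, -((P t).mulVec (Y t) j) := by
    intro x hx j
    have h := congrFun (hZeq x hx) j
    rw [Pi.sub_apply] at h
    have h2 := ContinuousLinearMap.intervalIntegral_comp_comm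
      (ContinuousLinearMap.proj (R := ℂ) (φ := fun _ : Fin m => ℂ) j) (hPYii x hx)
    calc Z x j = Z 0 j - (∫ t in (0:ℝ)..x, (P t).mulVec (Y t)) j := h
    _ = Z 0 j - ∫ t in (0:ℝ)..x, (P t).mulVec (Y t) j := by congr 1; exact h2.symm
    _ = Z 0 j + ∫ t in (0:ℝ)..x, -((P t).mulVec (Y t) j) := by
        rw [intervalIntegral.integral_neg]; ring
  have conj_int : ∀ (f : ℝ → ℂ) (a b : ℝ),
      (∫ t in a..b, conj (f t)) = conj (∫ t in a..b, f t) := by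
    intro f a b
    simp [intervalIntegral, ← integral_conj, map_sub]
  -- Green's identity, componentwise
  have green_j : ∀ j, conj (Y Real.pi j) * Z Real.pi j - conj (Y 0 j) * Z 0 j
      = ∫ t in (0:ℝ)..Real.pi,
          (conj (Z t j) * Z t j - conj (Y t j) * ((P t).mulVec (Y t) j)) := by
    intro j
    have hfj : IntegrableOn (fun t => conj (Z t j)) (Icc 0 Real.pi) :=
      (continuous_star.comp_continuousOn (hZcj j)).integrableOn_Icc
    have hgj : IntegrableOn (fun t => -((P t).mulVec (Y t) j)) (Icc 0 Real.pi) := (hPYj j).neg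
    have hp := parts_pi (conj (Y 0 j)) (Z 0 j) hfj hgj
    have e1 : conj (Y 0 j) + ∫ t in (0:ℝ)..Real.pi, conj (Z t j) = conj (Y Real.pi j) := by
      rw [conj_int, ← map_add, ← hYj Real.pi hπmem j]
    have e2 : Z 0 j + ∫ t in (0:ℝ)..Real.pi, -((P t).mulVec (Y t) j) = Z Real.pi j :=
      (hZj Real.pi hπmem j).symm
    rw [e1, e2] at hp
    rw [hp]
    apply intervalIntegral.integral_congr
    intro t ht
    rw [uIcc_of_le hπ0] at ht
    have e3 : Z 0 j + ∫ s in (0:ℝ)..t, -((P s).mulVec (Y s) j) = Z t j := (hZj t ht j).symm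
    have e4 : conj (Y 0 j) + ∫ s in (0:ℝ)..t, conj (Z s j) = conj (Y t j) := by
      rw [conj_int, ← map_add, ← hYj t ht j]
    beta_reduce
    rw [e3, e4]
    ring
  -- summing up: Green's identity
  have hIint : ∀ j, IntervalIntegrable
      (fun t => conj (Z t j) * Z t j - conj (Y t j) * ((P t).mulVec (Y t) j))
      volume 0 Real.pi := by
    intro j
    have hA1 : IntegrableOn (fun t => conj (Z t j) * Z t j) (Icc 0 Real.pi) :=
      ((continuous_star.comp_continuousOn (hZcj j)).mul (hZcj j)).integrableOn_Icc
    have hA2 : IntegrableOn (fun t => conj (Y t j) * ((P t).mulVec (Y t) j))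
        (Icc 0 Real.pi) := (hPYj j).continuousOn_mul (hYconj j) isCompact_Icc
    have hA3 : IntegrableOn
        (fun t => conj (Z t j) * Z t j - conj (Y t j) * ((P t).mulVec (Y t) j))
        (Icc 0 Real.pi) := hA1.sub hA2
    rw [intervalIntegrable_iff_integrableOn_Ioc_of_le hπ0]
    exact hA3.mono_set Ioc_subset_Icc_self
  have green : star (Y Real.pi) ⬝ᵥ Z Real.pi - star (Y 0) ⬝ᵥ Z 0
      = ∫ t in (0:ℝ)..Real.pi,
          (star (Z t) ⬝ᵥ Z t - star (Y t) ⬝ᵥ ((P t).mulVec (Y t))) := by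
    have lhs : star (Y Real.pi) ⬝ᵥ Z Real.pi - star (Y 0) ⬝ᵥ Z 0
        = ∑ j, (conj (Y Real.pi j) * Z Real.pi j - conj (Y 0 j) * Z 0 j) := by
      simp [dotProduct, Pi.star_apply, Complex.star_def, Finset.sum_sub_distrib]
    rw [lhs, Finset.sum_congr rfl fun j _ => green_j j,
      ← intervalIntegral.integral_finset_sum (fun j _ => hIint j)]
    apply intervalIntegral.integral_congr
    intro t _
    simp [dotProduct, Pi.star_apply, Complex.star_def, Finset.sum_sub_distrib]
  -- quadratic-form integrability
  have quadInt : ∀ {Q : ℝ → Matrix (Fin m) (Fin m) ℂ}, @IntegrableOn ℝ _ _ _ SeminormedAddGroup.toContinuousENorm Q (Icc 0 Real.pi) volume →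
      IntegrableOn (fun t => star (Y t) ⬝ᵥ ((Q t).mulVec (Y t))) (Icc 0 Real.pi) := by
    intro Q hQ
    have he : (fun t => star (Y t) ⬝ᵥ ((Q t).mulVec (Y t)))
        = fun t => ∑ j, conj (Y t j) * ((Q t).mulVec (Y t) j) := by
      funext t; simp [dotProduct, Pi.star_apply, Complex.star_def]
    rw [he]
    refine integrable_finset_sum _ fun j _ => ?_
    have hQYj : IntegrableOn (fun t => (Q t).mulVec (Y t) j) (Icc 0 Real.pi) := by
      have he2 : (fun t => (Q t).mulVec (Y t) j) = fun t => ∑ k, Q t j k * Y t k := by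
        funext t; simp [Matrix.mulVec, dotProduct]
      rw [he2]
      exact integrable_finset_sum _ fun k _ =>
        (entry_integrable hQ j k).mul_continuousOn (hYcj k) isCompact_Icc
    exact hQYj.continuousOn_mul (hYconj j) isCompact_Icc
  have hYYc : ContinuousOn (fun t => star (Y t) ⬝ᵥ Y t) (Icc 0 Real.pi) := by
    have he : (fun t => star (Y t) ⬝ᵥ Y t) = fun t => ∑ j, conj (Y t j) * Y t j := by
      funext t; simp [dotProduct, Pi.star_apply, Complex.star_def]
    rw [he]
    exact continuousOn_finset_sum _ fun j _ => (hYconj j).mul (hYcj j)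
  have hZZc : ContinuousOn (fun t => star (Z t) ⬝ᵥ Z t) (Icc 0 Real.pi) := by
    have he : (fun t => star (Z t) ⬝ᵥ Z t) = fun t => ∑ j, conj (Z t j) * Z t j := by
      funext t; simp [dotProduct, Pi.star_apply, Complex.star_def]
    rw [he]
    exact continuousOn_finset_sum _ fun j _ =>
      (continuous_star.comp_continuousOn (hZcj j)).mul (hZcj j)
  have II : ∀ {f : ℝ → ℂ}, IntegrableOn f (Icc 0 Real.pi) →
      IntervalIntegrable f volume 0 Real.pi := by
    intro f h
    rw [intervalIntegrable_iff_integrableOn_Ioc_of_le hπ0]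
    exact h.mono_set Ioc_subset_Icc_self
  set aC := ∫ t in (0:ℝ)..Real.pi, star (Y t) ⬝ᵥ Y t with haCdef
  set nC := ∫ t in (0:ℝ)..Real.pi, star (Z t) ⬝ᵥ Z t with hnCdef
  set s1C := ∫ t in (0:ℝ)..Real.pi, star (Y t) ⬝ᵥ ((Q1 t).mulVec (Y t)) with hs1Cdef
  set s0C := ∫ t in (0:ℝ)..Real.pi, star (Y t) ⬝ᵥ ((Q0 t).mulVec (Y t)) with hs0Cdef
  -- splitting the integral
  have hsplit : (∫ t in (0:ℝ)..Real.pi,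
        (star (Z t) ⬝ᵥ Z t - star (Y t) ⬝ᵥ ((P t).mulVec (Y t))))
      = nC - (ρ^2 * aC + (2*Complex.I*ρ) * s1C + s0C) := by
    have hexp : EqOn (fun t => star (Z t) ⬝ᵥ Z t - star (Y t) ⬝ᵥ ((P t).mulVec (Y t)))
        (fun t => star (Z t) ⬝ᵥ Z t - (ρ^2 * (star (Y t) ⬝ᵥ Y t)
          + (2*Complex.I*ρ) * (star (Y t) ⬝ᵥ ((Q1 t).mulVec (Y t)))
          + star (Y t) ⬝ᵥ ((Q0 t).mulVec (Y t)))) (uIcc 0 Real.pi) := by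
      intro t _
      simp only [hPdef, pencilPot, Matrix.add_mulVec, Matrix.smul_mulVec,
        Matrix.one_mulVec, dotProduct_add, dotProduct_smul, smul_eq_mul]
    rw [intervalIntegral.integral_congr hexp]
    have i1 : IntervalIntegrable (fun t => ρ^2 * (star (Y t) ⬝ᵥ Y t)) volume 0 Real.pi :=
      (II hYYc.integrableOn_Icc).const_mul _
    have i2 : IntervalIntegrable
        (fun t => (2*Complex.I*ρ) * (star (Y t) ⬝ᵥ ((Q1 t).mulVec (Y t)))) volume 0 Real.pi :=
      (II (quadInt hQ1)).const_mul _
    have i3 : IntervalIntegrable (fun t => star (Y t) ⬝ᵥ ((Q0 t).mulVec (Y t)))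
        volume 0 Real.pi := II (quadInt hQ0)
    rw [intervalIntegral.integral_sub (II hZZc.integrableOn_Icc) ((i1.add i2).add i3),
      intervalIntegral.integral_add (i1.add i2) i3, intervalIntegral.integral_add i1 i2,
      intervalIntegral.integral_const_mul, intervalIntegral.integral_const_mul]
  -- boundary conditions
  set T1 := star (Y Real.pi) ⬝ᵥ (H1.mulVec (Y Real.pi)) with hT1def
  set T0 := star (Y Real.pi) ⬝ᵥ (H0.mulVec (Y Real.pi)) with hT0def
  set t1s := star (Y 0) ⬝ᵥ (h1.mulVec (Y 0)) with ht1def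
  set t0s := star (Y 0) ⬝ᵥ (h0.mulVec (Y 0)) with ht0def
  have hbπ' : star (Y Real.pi) ⬝ᵥ Z Real.pi = -(Complex.I * ρ * T1 + T0) := by
    have h : Z Real.pi = -(((Complex.I * ρ) • H1 + H0).mulVec (Y Real.pi)) :=
      eq_neg_of_add_eq_zero_left hbcπ
    rw [h, dotProduct_neg, Matrix.add_mulVec, Matrix.smul_mulVec, dotProduct_add,
      dotProduct_smul, smul_eq_mul, hT1def, hT0def]
  have hb0' : star (Y 0) ⬝ᵥ Z 0 = -(Complex.I * ρ * t1s + t0s) := by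
    have h : Z 0 = -(((Complex.I * ρ) • h1 + h0).mulVec (Y 0)) :=
      eq_neg_of_add_eq_zero_left hbc0
    rw [h, dotProduct_neg, Matrix.add_mulVec, Matrix.smul_mulVec, dotProduct_add,
      dotProduct_smul, smul_eq_mul, ht1def, ht0def]
  have main : ρ^2 * aC + ρ * (2*Complex.I*s1C - Complex.I*T1 + Complex.I*t1s)
      - (nC + T0 - t0s - s0C) = 0 := by
    have g2 := green
    rw [hsplit, hbπ', hb0'] at g2
    linear_combination g2
  -- realness facts
  have hWY : ∀ v : Fin m → ℂ, star v ⬝ᵥ v = ((∑ j, Complex.normSq (v j) : ℝ) : ℂ) := by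
    intro v
    push_cast
    exact Finset.sum_congr rfl fun j _ => by
      rw [Pi.star_apply, Complex.star_def, ← Complex.normSq_eq_conj_mul_self]
  set A := ∫ t in (0:ℝ)..Real.pi, ∑ j, Complex.normSq (Y t j) with hAdef
  set N := ∫ t in (0:ℝ)..Real.pi, ∑ j, Complex.normSq (Z t j) with hNdef
  have haR : aC = ((A : ℝ) : ℂ) := by
    rw [hAdef, ← intervalIntegral.integral_ofReal]
    apply intervalIntegral.integral_congr
    intro t _
    exact hWY (Y t)
  have hnR : nC = ((N : ℝ) : ℂ) := by
    rw [hNdef, ← intervalIntegral.integral_ofReal]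
    apply intervalIntegral.integral_congr
    intro t _
    exact hWY (Z t)
  have hN0 : 0 ≤ N :=
    intervalIntegral.integral_nonneg hπ0 fun u _ =>
      Finset.sum_nonneg fun k _ => Complex.normSq_nonneg _
  -- A > 0
  have hAcont : ContinuousOn (fun t => ∑ j, Complex.normSq (Y t j)) (Icc 0 Real.pi) :=
    continuousOn_finset_sum _ fun j _ =>
      Complex.continuous_normSq.comp_continuousOn (hYcj j)
  have hApos : 0 < A := by
    obtain ⟨x₀, hx₀mem, hx₀ne⟩ : ∃ x ∈ Icc (0:ℝ) Real.pi, Y x ≠ 0 := by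
      push_neg at hYne; exact hYne
    have hw0 : 0 < ∑ j, Complex.normSq (Y x₀ j) := by
      obtain ⟨j, hj⟩ := Function.ne_iff.1 hx₀ne
      exact Finset.sum_pos' (fun k _ => Complex.normSq_nonneg _)
        ⟨j, Finset.mem_univ j, Complex.normSq_pos.2 hj⟩
    have hA0 : 0 ≤ A := intervalIntegral.integral_nonneg hπ0 fun u _ =>
      Finset.sum_nonneg fun k _ => Complex.normSq_nonneg _
    rcases hA0.lt_or_eq with h | h
    · exact h
    · exfalso
      have hint : IntegrableOn (fun t => ∑ j, Complex.normSq (Y t j)) (Ioc 0 Real.pi) :=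
        hAcont.integrableOn_Icc.mono_set Ioc_subset_Icc_self
      have hzero : (fun t => ∑ j, Complex.normSq (Y t j))
          =ᵐ[volume.restrict (Ioc 0 Real.pi)] 0 := by
        rw [← integral_eq_zero_iff_of_nonneg_ae
          (Filter.Eventually.of_forall fun u => Finset.sum_nonneg fun k _ => Complex.normSq_nonneg _)
          hint]
        rw [← intervalIntegral.integral_of_le hπ0]
        exact h.symm
      have hIccae : (fun t => ∑ j, Complex.normSq (Y t j))
          =ᵐ[volume.restrict (Icc 0 Real.pi)] 0 := by
        rwa [Measure.restrict_congr_set Ioc_ae_eq_Icc] at hzero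
      have hclos : Icc (0:ℝ) Real.pi ⊆ closure (interior (Icc (0:ℝ) Real.pi)) := by
        rw [interior_Icc, closure_Ioo Real.pi_pos.ne]
      have heq := Measure.eqOn_of_ae_eq hIccae hAcont continuousOn_const hclos
      have := heq hx₀mem
      simp only [Pi.zero_apply] at this
      exact hw0.ne' this
  -- s0 is real and nonpositive
  have hq0ae : ∀ᵐ t ∂(volume.restrict (Icc 0 Real.pi)),
      star (Y t) ⬝ᵥ ((Q0 t).mulVec (Y t))
        = (((star (Y t) ⬝ᵥ ((Q0 t).mulVec (Y t))).re : ℝ) : ℂ)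
      ∧ (star (Y t) ⬝ᵥ ((Q0 t).mulVec (Y t))).re ≤ 0 := by
    filter_upwards [hQ0neg] with t ht
    have h0 := ht.dotProduct_mulVec_nonneg (Y t)
    rw [Matrix.neg_mulVec, dotProduct_neg, Complex.le_def] at h0
    simp only [Complex.zero_re, Complex.zero_im, Complex.neg_re, Complex.neg_im] at h0
    refine ⟨?_, by linarith [h0.1]⟩
    apply Complex.ext
    · simp
    · simp only [Complex.ofReal_im]
      linarith [h0.2]
  set S0 := ∫ t in (0:ℝ)..Real.pi, (star (Y t) ⬝ᵥ ((Q0 t).mulVec (Y t))).re with hS0def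
  have hs0R : s0C = ((S0 : ℝ) : ℂ) := by
    rw [hS0def, ← intervalIntegral.integral_ofReal, hs0Cdef]
    apply intervalIntegral.integral_congr_ae
    have hae := (ae_restrict_iff' measurableSet_Icc).1 (hq0ae.mono fun t h => h.1)
    filter_upwards [hae] with t ht hIoc
    rw [uIoc_of_le hπ0] at hIoc
    exact ht (Ioc_subset_Icc_self hIoc)
  have hS0le : S0 ≤ 0 := by
    have hnonneg : 0 ≤ᵐ[volume.restrict (Icc 0 Real.pi)]
        fun t => -(star (Y t) ⬝ᵥ ((Q0 t).mulVec (Y t))).re :=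
      hq0ae.mono fun t h => by simpa using h.2
    have hni := intervalIntegral.integral_nonneg_of_ae_restrict hπ0 hnonneg
    rw [intervalIntegral.integral_neg] at hni
    rw [hS0def]
    linarith
  -- s1 purely imaginary
  have hq1ae : ∀ᵐ t ∂volume, t ∈ Set.uIoc (0:ℝ) Real.pi →
      conj (star (Y t) ⬝ᵥ ((Q1 t).mulVec (Y t)))
        = -(star (Y t) ⬝ᵥ ((Q1 t).mulVec (Y t))) := by
    have h := (ae_restrict_iff' measurableSet_Icc).1 hQ1skew
    filter_upwards [h] with t ht hI
    rw [uIoc_of_le hπ0] at hI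
    have h2 := ht (Ioc_subset_Icc_self hI)
    rw [conj_quad, h2, Matrix.neg_mulVec, dotProduct_neg]
  have hs1conj : conj s1C = -s1C := by
    rw [hs1Cdef, ← conj_int, intervalIntegral.integral_congr_ae hq1ae,
      intervalIntegral.integral_neg]
  have hs1re : s1C.re = 0 := by
    have h := congrArg Complex.re hs1conj
    simp only [Complex.conj_re, Complex.neg_re] at h
    linarith
  -- T1 and t1 purely imaginary
  have hT1re : T1.re = 0 := by
    have h := conj_quad H1 (Y Real.pi)
    rw [hH1, Matrix.neg_mulVec, dotProduct_neg] at h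
    have h2 := congrArg Complex.re h
    simp only [Complex.conj_re, Complex.neg_re, hT1def] at h2 ⊢
    linarith
  have ht1re : t1s.re = 0 := by
    have h := conj_quad h1 (Y 0)
    rw [hh1, Matrix.neg_mulVec, dotProduct_neg] at h
    have h2 := congrArg Complex.re h
    simp only [Complex.conj_re, Complex.neg_re, ht1def] at h2 ⊢
    linarith
  -- T0 nonneg real, t0 nonpos real
  have hT0' := hH0pos.dotProduct_mulVec_nonneg (Y Real.pi)
  rw [Complex.le_def] at hT0'
  simp only [Complex.zero_re, Complex.zero_im] at hT0'
  have ht0' := hh0neg.dotProduct_mulVec_nonneg (Y 0)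
  rw [Matrix.neg_mulVec, dotProduct_neg, Complex.le_def] at ht0'
  simp only [Complex.zero_re, Complex.zero_im, Complex.neg_re, Complex.neg_im] at ht0'
  have hT0re : 0 ≤ T0.re := by rw [hT0def]; exact hT0'.1
  have hT0im : T0.im = 0 := by rw [hT0def]; exact hT0'.2.symm
  have ht0re : t0s.re ≤ 0 := by rw [ht0def]; linarith [ht0'.1]
  have ht0im : t0s.im = 0 := by rw [ht0def]; linarith [ht0'.2]
  -- final assembly
  have e_s1 : s1C = (s1C.im : ℂ) * Complex.I := by
    apply Complex.ext <;> simp [hs1re]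
  have e_T1 : T1 = (T1.im : ℂ) * Complex.I := by
    apply Complex.ext <;> simp [hT1re]
  have e_t1 : t1s = (t1s.im : ℂ) * Complex.I := by
    apply Complex.ext <;> simp [ht1re]
  have e_T0 : T0 = ((T0.re : ℝ) : ℂ) := by
    apply Complex.ext <;> simp [hT0im]
  have e_t0 : t0s = ((t0s.re : ℝ) : ℂ) := by
    apply Complex.ext <;> simp [ht0im]
  refine quad_real (A := A) (C := -(2*s1C.im) + T1.im - t1s.im)
    (B := N + T0.re - t0s.re - S0) hApos (by linarith [hN0, hT0re, ht0re, hS0le]) ?_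
  rw [haR, hnR, hs0R, e_s1, e_T1, e_t1, e_T0, e_t0] at main
  push_cast
  linear_combination main - ρ*(2*(s1C.im:ℂ) - (T1.im:ℂ) + (t1s.im:ℂ))*Complex.I_sq
end
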